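/- arXiv:1510.03943 — 2 statements merged into one kernel-verified Lean document; each statement's English description precedes it below -/
import Mathlib

section
/- Let ω ∈ Ω, let x ∈ ℤ² lie in an infinite 0-cluster of ω and let y ∈ ℤ² lie in an infinite 1-cluster of ω, and let ℓ be a path of edges of G connecting x and y. Then ℓ crosses infinite contours of φ(ω) an odd total number of times. In particular, if ω has both an infinite 0-cluster and an infinite 1-cluster, then φ(ω) has an infinite contour. -/
open scoped Classical ENNReal
open MeasureTheory

noncomputable section

namespace CP

/-! ### Site configurations and clusters on the square lattice `G = ℤ²`.
States `0` / `1` are encoded as `false` / `true`. -/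

abbrev Config := ℤ × ℤ → Bool

/-- Adjacency in the square lattice `G` on `ℤ²` (ℓ¹-distance one). -/
def ZAdj (u v : ℤ × ℤ) : Prop := |u.1 - v.1| + |u.2 - v.2| = 1

/-- The hard local constraint: around each black face (lower-left corner `(m,n)` with
`m + n` even), the corners read clockwise from the lower-left corner form one of the
words `0000, 1111, 0011, 1100, 0110, 1001`; equivalently, the two vertical sides are
each monochromatic, or the two horizontal sides are each monochromatic. -/
def Constrained (ω : Config) : Prop :=
  ∀ m n : ℤ, Even (m + n) →
    ((ω (m, n) = ω (m, n + 1) ∧ ω (m + 1, n) = ω (m + 1, n + 1)) ∨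
     (ω (m, n) = ω (m + 1, n) ∧ ω (m, n + 1) = ω (m + 1, n + 1)))

/-- `u` and `v` are joined by a path of vertices all having the same state. -/
def SameCluster (ω : Config) (u v : ℤ × ℤ) : Prop :=
  Relation.ReflTransGen (fun a b => ZAdj a b ∧ ω a = ω b) u v

/-- The cluster of the vertex `v`. -/
def cluster (ω : Config) (v : ℤ × ℤ) : Set (ℤ × ℤ) := {w | SameCluster ω v w}

def IsCluster (ω : Config) (D : Set (ℤ × ℤ)) : Prop := ∃ v, D = cluster ω v

def infiniteClusters (ω : Config) : Set (Set (ℤ × ℤ)) := {D | IsCluster ω D ∧ D.Infinite}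

/-! ### Contours.
An edge of `ℒ₁ ∪ ℒ₂` is encoded by the black face it crosses (its lower-left corner)
together with its direction (`true` = horizontal).  Endpoints are recorded in doubled
coordinates, so that the vertex `(x, y)` of the plane corresponds to `(2x, 2y)`. -/

abbrev BEdge := (ℤ × ℤ) × Bool

def IsBlackFace (f : ℤ × ℤ) : Prop := Even (f.1 + f.2)

/-- Edges of `ℒ₁` (whose vertices are the points `(m - 1/2, n + 1/2)`, `m, n` even). -/
def IsPrimalEdge (e : BEdge) : Prop :=
  (e.2 = true ∧ Even e.1.1 ∧ Even e.1.2) ∨ (e.2 = false ∧ Odd e.1.1 ∧ Odd e.1.2)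

/-- Edges of `ℒ₂` (whose vertices are the points `(m - 1/2, n + 1/2)`, `m, n` odd). -/
def IsDualEdge (e : BEdge) : Prop :=
  (e.2 = true ∧ Odd e.1.1 ∧ Odd e.1.2) ∨ (e.2 = false ∧ Even e.1.1 ∧ Even e.1.2)

/-- The two endpoints of a contour edge, in doubled coordinates. -/
def edgeEnds (e : BEdge) : (ℤ × ℤ) × (ℤ × ℤ) :=
  if e.2 then ((2 * e.1.1 - 1, 2 * e.1.2 + 1), (2 * e.1.1 + 3, 2 * e.1.2 + 1))
  else ((2 * e.1.1 + 1, 2 * e.1.2 - 1), (2 * e.1.1 + 1, 2 * e.1.2 + 3))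

def shareEnd (e₁ e₂ : BEdge) : Prop :=
  (edgeEnds e₁).1 = (edgeEnds e₂).1 ∨ (edgeEnds e₁).1 = (edgeEnds e₂).2 ∨
  (edgeEnds e₁).2 = (edgeEnds e₂).1 ∨ (edgeEnds e₁).2 = (edgeEnds e₂).2

/-- The contour configuration `φ(ω)`: a horizontal (resp. vertical) edge crossing the
black face with lower-left corner `(m, n)` is present iff the two lower corners differ
from the two upper ones (resp. the two left corners differ from the two right ones). -/
def contourCfg (ω : Config) (e : BEdge) : Bool :=
  if IsBlackFace e.1 then
    (if e.2 then ω (e.1.1, e.1.2) != ω (e.1.1, e.1.2 + 1)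
     else ω (e.1.1, e.1.2) != ω (e.1.1 + 1, e.1.2))
  else false

def SameContourB (φ : BEdge → Bool) (e e' : BEdge) : Prop :=
  Relation.ReflTransGen (fun a b => φ a = true ∧ φ b = true ∧ shareEnd a b) e e'

def contourB (φ : BEdge → Bool) (e : BEdge) : Set BEdge := {e' | SameContourB φ e e'}

/-- `C` is a contour (connected component of present edges) of the edge configuration `φ`. -/
def IsContourB (φ : BEdge → Bool) (C : Set BEdge) : Prop := ∃ e, φ e = true ∧ C = contourB φ e

def IsContour (ω : Config) (C : Set BEdge) : Prop := IsContourB (contourCfg ω) C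

def IsPrimalContour (ω : Config) (C : Set BEdge) : Prop := IsContour ω C ∧ ∀ e ∈ C, IsPrimalEdge e

def IsDualContour (ω : Config) (C : Set BEdge) : Prop := IsContour ω C ∧ ∀ e ∈ C, IsDualEdge e

/-- The vertex `v` of `G` is at Euclidean distance `1/2` from the contour edge `e`
(equivalently, `v` is a corner of the black face crossed by `e`). -/
def EdgeIncVtx (e : BEdge) (v : ℤ × ℤ) : Prop :=
  (v.1 = e.1.1 ∨ v.1 = e.1.1 + 1) ∧ (v.2 = e.1.2 ∨ v.2 = e.1.2 + 1)

/-- The contour `C` is incident to the cluster `D`. -/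
def ContourIncCluster (C : Set BEdge) (D : Set (ℤ × ℤ)) : Prop := ∃ e ∈ C, ∃ v ∈ D, EdgeIncVtx e v

/-- The edge of `G` joining `u` and `v` is crossed by the contour edge `e`
(doubled midpoints are compared). -/
def crossesG (e : BEdge) (u v : ℤ × ℤ) : Prop :=
  ZAdj u v ∧
    (if e.2 then
      (u.1 + v.1, u.2 + v.2) = (2 * e.1.1, 2 * e.1.2 + 1) ∨
      (u.1 + v.1, u.2 + v.2) = (2 * e.1.1 + 2, 2 * e.1.2 + 1)
     else
      (u.1 + v.1, u.2 + v.2) = (2 * e.1.1 + 1, 2 * e.1.2) ∨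
      (u.1 + v.1, u.2 + v.2) = (2 * e.1.1 + 1, 2 * e.1.2 + 2))

/-- The connected component of `v` in the graph obtained from `G` by deleting every
edge crossed by some contour edge belonging to `R`. -/
def GminusComp (R : Set BEdge) (v : ℤ × ℤ) : Set (ℤ × ℤ) :=
  {w | Relation.ReflTransGen (fun a b => ZAdj a b ∧ ¬∃ e ∈ R, crossesG e a b) v w}

/-! ### Ends of contours -/

/-- The connected component of the edge `e` within the edge set `S`. -/
def compIn (S : Set BEdge) (e : BEdge) : Set BEdge :=
  {e' | Relation.ReflTransGen (fun a b => a ∈ S ∧ b ∈ S ∧ shareEnd a b) e e'}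

/-- The contour `C` has at most two ends: removing any finite set of edges leaves at
most two infinite components. -/
def AtMostTwoEnds (C : Set BEdge) : Prop :=
  ∀ F : Set BEdge, F.Finite →
    ∀ e₁ e₂ e₃, e₁ ∈ C \ F → e₂ ∈ C \ F → e₃ ∈ C \ F →
      (compIn (C \ F) e₁).Infinite → (compIn (C \ F) e₂).Infinite →
      (compIn (C \ F) e₃).Infinite →
      compIn (C \ F) e₁ = compIn (C \ F) e₂ ∨ compIn (C \ F) e₁ = compIn (C \ F) e₃ ∨
        compIn (C \ F) e₂ = compIn (C \ F) e₃

/-! ### Planar embedding.  Note that `ℝ × ℝ` carries the ℓ∞ (sup) product metric. -/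

abbrev Plane := ℝ × ℝ

/-- The point of the plane with doubled coordinates `p`. -/
def ptOfDoubled (p : ℤ × ℤ) : Plane := ((p.1 : ℝ) / 2, (p.2 : ℝ) / 2)

/-- The planar position of a vertex of `G`. -/
def vtxPt (v : ℤ × ℤ) : Plane := ((v.1 : ℝ), (v.2 : ℝ))

/-- The closed planar segment realizing a contour edge. -/
def segOf (e : BEdge) : Set Plane :=
  segment ℝ (ptOfDoubled (edgeEnds e).1) (ptOfDoubled (edgeEnds e).2)

/-- The closed subset of `ℝ²` realizing a set of contour edges. -/
def contourSet (C : Set BEdge) : Set Plane := ⋃ e ∈ C, segOf e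

/-- The unbounded connected components of the complement of `S ⊆ ℝ²`. -/
def unbComps (S : Set Plane) : Set (Set Plane) :=
  {T | (∃ x ∈ Sᶜ, T = connectedComponentIn Sᶜ x) ∧ ¬Bornology.IsBounded T}

/-- The family `𝒞₂` of infinite contours whose planar complement has exactly two
unbounded components. -/
def C2set (ω : Config) : Set (Set BEdge) :=
  {C | IsContour ω C ∧ C.Infinite ∧ (unbComps (contourSet C)).ncard = 2}

/-! ### Interfaces, drawn on the dual `[Aℤ²]*` of the augmented square grid. -/

/-- `R(e)`: points at ℓ∞-distance at most `1/4` from the segment `e`. -/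
def Rnbhd (e : BEdge) : Set Plane := {x | Metric.infDist x (segOf e) ≤ 1 / 4}

/-- Edges of `[Aℤ²]*`, encoded by (index of) their lower-left endpoint and a direction
(`true` = horizontal); the vertex with index `(k, l)` is the point `(k/2 + 1/4, l/2 + 1/4)`. -/
abbrev QEdge := (ℤ × ℤ) × Bool

def qVtx (p : ℤ × ℤ) : Plane := ((p.1 : ℝ) / 2 + 1 / 4, (p.2 : ℝ) / 2 + 1 / 4)

def qEnds (q : QEdge) : (ℤ × ℤ) × (ℤ × ℤ) :=
  if q.2 then (q.1, (q.1.1 + 1, q.1.2)) else (q.1, (q.1.1, q.1.2 + 1))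

def qSeg (q : QEdge) : Set Plane := segment ℝ (qVtx (qEnds q).1) (qVtx (qEnds q).2)

/-- The interface of a contour `C`: the edges of `[Aℤ²]*` constituting the topological
boundary of `⋃ e ∈ C, R(e)`. -/
def ifaceEdges (C : Set BEdge) : Set QEdge := {q | qSeg q ⊆ frontier (⋃ e ∈ C, Rnbhd e)}

/-- The interface of the contour configuration `φ(ω)`: the union of the interfaces of
all contours. -/
def interfaceOf (ω : Config) : Set QEdge := ⋃ C ∈ {C | IsContour ω C}, ifaceEdges C

def qShare (q₁ q₂ : QEdge) : Prop :=
  (qEnds q₁).1 = (qEnds q₂).1 ∨ (qEnds q₁).1 = (qEnds q₂).2 ∨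
  (qEnds q₁).2 = (qEnds q₂).1 ∨ (qEnds q₁).2 = (qEnds q₂).2

def qCompIn (S : Set QEdge) (q : QEdge) : Set QEdge :=
  {q' | Relation.ReflTransGen (fun a b => a ∈ S ∧ b ∈ S ∧ qShare a b) q q'}

/-- `I` is a connected component of the interface of `φ(ω)`. -/
def IsInterfaceComp (ω : Config) (I : Set QEdge) : Prop :=
  ∃ q ∈ interfaceOf ω, I = qCompIn (interfaceOf ω) q

/-- The subset of `ℝ²` realizing a set of `[Aℤ²]*`-edges. -/
def qRealize (I : Set QEdge) : Set Plane := ⋃ q ∈ I, qSeg q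

/-- `F_I`: the vertices of `G` at ℓ∞-distance exactly `1/4` from `I`. -/
def interfaceNbrs (I : Set QEdge) : Set (ℤ × ℤ) :=
  {v | Metric.infDist (vtxPt v) (qRealize I) = 1 / 4}

/-- The edge set `I` is a doubly-infinite self-avoiding path in `[Aℤ²]*`. -/
def IsBiInfPathQ (I : Set QEdge) : Prop :=
  ∃ γ : ℤ → ℤ × ℤ, Function.Injective γ ∧
    (∀ i : ℤ, ∃ q ∈ I, qEnds q = (γ i, γ (i + 1)) ∨ qEnds q = (γ (i + 1), γ i)) ∧
    (∀ q ∈ I, ∃ i : ℤ, qEnds q = (γ i, γ (i + 1)) ∨ qEnds q = (γ (i + 1), γ i))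

/-- The edge set `I` is a (finite) self-avoiding cycle in `[Aℤ²]*`. -/
def IsCycleQ (I : Set QEdge) : Prop :=
  ∃ n : ℕ, 0 < n ∧ ∃ γ : ℤ → ℤ × ℤ,
    (∀ i : ℤ, γ (i + n) = γ i) ∧
    (∀ i j : ℤ, 0 ≤ i → i < j → j < n → γ i ≠ γ j) ∧
    (∀ i : ℤ, ∃ q ∈ I, qEnds q = (γ i, γ (i + 1)) ∨ qEnds q = (γ (i + 1), γ i)) ∧
    (∀ q ∈ I, ∃ i : ℤ, qEnds q = (γ i, γ (i + 1)) ∨ qEnds q = (γ (i + 1), γ i))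

/-- `F` is the vertex set of a doubly-infinite self-avoiding path in `G`. -/
def IsBiInfPathVtxSet (F : Set (ℤ × ℤ)) : Prop :=
  ∃ p : ℤ → ℤ × ℤ, Function.Injective p ∧ (∀ i : ℤ, ZAdj (p i) (p (i + 1))) ∧ Set.range p = F

/-- `F` is the vertex set of a self-avoiding cycle in `G`. -/
def IsCycleVtxSet (F : Set (ℤ × ℤ)) : Prop :=
  ∃ n : ℕ, 0 < n ∧ ∃ p : ℤ → ℤ × ℤ,
    (∀ i : ℤ, p (i + n) = p i) ∧
    (∀ i j : ℤ, 0 ≤ i → i < j → j < n → p i ≠ p j) ∧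
    (∀ i : ℤ, ZAdj (p i) (p (i + 1))) ∧ Set.range p = F

/-! ### Measures, translations and symmetries -/

/-- Translation of configurations by `t ∈ ℤ²`. -/
def shift (t : ℤ × ℤ) (ω : Config) : Config := fun v => ω (v.1 - t.1, v.2 - t.2)

/-- The involution `θ` exchanging the states `0` and `1`. -/
def flipConf (ω : Config) : Config := fun v => !(ω v)

/-- The primal contour configuration (the marginal on `E(ℒ₁)`). -/
def primalOf (ω : Config) : BEdge → Bool := fun e => if IsPrimalEdge e then contourCfg ω e else false

/-- The dual contour configuration (the marginal on `E(ℒ₂)`). -/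
def dualOf (ω : Config) : BEdge → Bool := fun e => if IsDualEdge e then contourCfg ω e else false

/-- The four boundary edges of the face `S` of `ℒ₁` indexed by the parameters
`(p, q)` (`p`, `q` odd) of the `ℒ₂`-vertex at its centre. -/
def faceEdgesL1 (p q : ℤ) : Set BEdge :=
  {((p - 1, q + 1), true), ((p - 1, q - 1), true), ((p - 2, q), false), ((p, q), false)}

/-- Switch the states of the four boundary edges of a face of `ℒ₁`. -/
def switchFace (p q : ℤ) (φ : BEdge → Bool) : BEdge → Bool :=
  fun e => if e ∈ faceEdgesL1 p q then !(φ e) else φ e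

/-- (A1): invariance under the subgroup of `ℤ²` generated by `(1,1)` and `(1,-1)`,
i.e. under every translation `t` with `t.1 + t.2` even. -/
def SatisfiesA1 (μ : Measure Config) : Prop :=
  ∀ t : ℤ × ℤ, Even (t.1 + t.2) → Measure.map (shift t) μ = μ

/-- (A2): `2ℤ × 2ℤ`-ergodicity. -/
def SatisfiesA2 (μ : Measure Config) : Prop :=
  ∀ A : Set Config, MeasurableSet A →
    (∀ t : ℤ × ℤ, shift (2 * t.1, 2 * t.2) ⁻¹' A = A) → μ A = 0 ∨ μ A = 1

/-- (A3): symmetry under exchanging `0` and `1`. -/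
def SatisfiesA3 (μ : Measure Config) : Prop := Measure.map flipConf μ = μ

/-- (Ak1): invariance under `2kℤ × 2kℤ`-translations. -/
def SatisfiesAk1 (k : ℕ) (μ : Measure Config) : Prop :=
  ∀ t : ℤ × ℤ, Measure.map (shift (2 * (k : ℤ) * t.1, 2 * (k : ℤ) * t.2)) μ = μ

/-- (Ak2): `2kℤ × 2kℤ`-ergodicity. -/
def SatisfiesAk2 (k : ℕ) (μ : Measure Config) : Prop :=
  ∀ A : Set Config, MeasurableSet A →
    (∀ t : ℤ × ℤ, shift (2 * (k : ℤ) * t.1, 2 * (k : ℤ) * t.2) ⁻¹' A = A) →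
      μ A = 0 ∨ μ A = 1

/-- (A4): finite energy of the primal contour marginal `ν₁ = primalOf_* μ`:
switching the four sides of a face of `ℒ₁` preserves positivity of probabilities. -/
def SatisfiesA4 (μ : Measure Config) : Prop :=
  ∀ p q : ℤ, Odd p → Odd q → ∀ E : Set (BEdge → Bool), MeasurableSet E →
    0 < Measure.map primalOf μ E → 0 < Measure.map primalOf μ (switchFace p q '' E)

/-! ### The induced site configuration on `V(ℒ₁)` (for assumption (A5)).
Vertices of `ℒ₁` are indexed by `(a, b) ∈ ℤ²` (the vertex `(2a - 1/2, 2b + 1/2)`);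
the base vertex `v₀` has index `(0, 0)`. -/

/-- Parity (as a `Bool`) of the number of `i` between `0` and `j` with `f i = true`. -/
def rangeParity (f : ℤ → Bool) (j : ℤ) : Bool :=
  if 0 ≤ j then decide (Odd (((Finset.Ico (0 : ℤ) j).filter fun i => f i = true).card))
  else decide (Odd (((Finset.Ico j (0 : ℤ)).filter fun i => f i = true).card))

/-- The site configuration on `V(ℒ₁)` induced by a dual contour configuration `ψ`
and the state `b₀` at the base vertex: states flip exactly across present dual edges. -/
def inducedSite (b₀ : Bool) (ψ : BEdge → Bool) : Config :=
  fun v => Bool.xor b₀ (Bool.xor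
    (rangeParity (fun i => ψ ((2 * i, 0), false)) v.1)
    (rangeParity (fun l => ψ ((2 * v.1 - 1, 2 * l + 1), true)) v.2))

/-- The law `λ₁` on `{0,1}^{V(ℒ₁)}` induced by the dual contour marginal of `μ`
together with a fair coin for the state of the base vertex. -/
def lam1 (μ : Measure Config) : Measure Config :=
  (1 / 2 : ℝ≥0∞) • Measure.map (fun ω => inducedSite true (dualOf ω)) μ +
    (1 / 2 : ℝ≥0∞) • Measure.map (fun ω => inducedSite false (dualOf ω)) μ

/-- (A5): `λ₁` is `2ℤ × 2ℤ`-ergodic (translations of the plane by `2ℤ × 2ℤ` act on the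
index set of `V(ℒ₁)` as all of `ℤ × ℤ`). -/
def SatisfiesA5 (μ : Measure Config) : Prop :=
  ∀ A : Set Config, MeasurableSet A → (∀ t : ℤ × ℤ, shift t ⁻¹' A = A) →
    lam1 μ A = 0 ∨ lam1 μ A = 1

/-! ### `ℒ₁`-edges indexed by `ℒ₁`-vertex coordinates; boxes of `ℒ₂`-faces. -/

/-- The horizontal edge of `ℒ₁` joining the `ℒ₁`-vertices indexed `(a, b)` and `(a+1, b)`. -/
def hEdge (a b : ℤ) : BEdge := ((2 * a, 2 * b), true)

/-- The vertical edge of `ℒ₁` joining the `ℒ₁`-vertices indexed `(a, b)` and `(a, b+1)`. -/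
def vEdge (a b : ℤ) : BEdge := ((2 * a - 1, 2 * b + 1), false)

/-- Membership in `Φ₁`: a bond configuration of `ℒ₁` in which every vertex of `ℒ₁`
has an even number of incident present edges. -/
def MemPhi1 (φ : BEdge → Bool) : Prop :=
  (∀ e, φ e = true → IsPrimalEdge e) ∧
    ∀ a b : ℤ,
      Even ((if φ (hEdge (a - 1) b) then 1 else 0) + (if φ (hEdge a b) then 1 else 0) +
        (if φ (vEdge a (b - 1)) then 1 else 0) + (if φ (vEdge a b) then 1 else 0) : ℕ)

/-- The edges of `ℒ₁` crossing the boundary of the `M × N` box of faces of `ℒ₂`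
whose lower-left face contains the `ℒ₁`-vertex indexed `(a₀, b₀)`. -/
def crossEdges (a₀ b₀ : ℤ) (M N : ℕ) : Finset BEdge :=
  ((Finset.Ico b₀ (b₀ + (N : ℤ))).image fun b => hEdge (a₀ - 1) b) ∪
  ((Finset.Ico b₀ (b₀ + (N : ℤ))).image fun b => hEdge (a₀ + (M : ℤ) - 1) b) ∪
  ((Finset.Ico a₀ (a₀ + (M : ℤ))).image fun a => vEdge a (b₀ - 1)) ∪
  ((Finset.Ico a₀ (a₀ + (M : ℤ))).image fun a => vEdge a (b₀ + (N : ℤ) - 1))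

/-- The `ℒ₁`-vertex indexed `(a, b)` lies strictly inside the box. -/
def insideBox (a₀ b₀ : ℤ) (M N : ℕ) (a b : ℤ) : Prop :=
  a₀ ≤ a ∧ a < a₀ + (M : ℤ) ∧ b₀ ≤ b ∧ b < b₀ + (N : ℤ)

/-- The edges of `ℒ₁` strictly enclosed by the boundary of the box (both endpoints
strictly inside): the subgraph `B_{M-1,N-1}`. -/
def interiorEdges (a₀ b₀ : ℤ) (M N : ℕ) : Set BEdge :=
  {e | (∃ a b : ℤ, e = hEdge a b ∧ insideBox a₀ b₀ M N a b ∧ insideBox a₀ b₀ M N (a + 1) b) ∨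
       (∃ a b : ℤ, e = vEdge a b ∧ insideBox a₀ b₀ M N a b ∧ insideBox a₀ b₀ M N a (b + 1))}

/-! ### Contours of an unconstrained site configuration on `V(ℒ₂)`.
Vertices of `ℒ₂` are indexed by `(c, d) ∈ ℤ²` (the vertex `(2c + 1/2, 2d + 3/2)`);
adjacency of `ℒ₂`-vertices is `ZAdj` on indices. -/

/-- The contour configuration `ψ₁(ρ)` on `ℒ₁` of a site configuration `ρ` on `V(ℒ₂)`:
an edge of `ℒ₁` is present iff the two `ℒ₂`-vertices at distance `1` from it have
different states. -/
def psi1 (ρ : Config) (e : BEdge) : Bool :=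
  if e.2 then
    if Even e.1.1 ∧ Even e.1.2 then
      ρ (e.1.1 / 2, e.1.2 / 2) != ρ (e.1.1 / 2, e.1.2 / 2 - 1)
    else false
  else
    if Odd e.1.1 ∧ Odd e.1.2 then
      ρ ((e.1.1 + 1) / 2 - 1, (e.1.2 - 1) / 2) != ρ ((e.1.1 + 1) / 2, (e.1.2 - 1) / 2)
    else false

/-- The (indices of the) two `ℒ₂`-vertices at Euclidean distance `1` from an `ℒ₁`-edge. -/
def sepVerts (e : BEdge) : Set (ℤ × ℤ) :=
  if e.2 then {(e.1.1 / 2, e.1.2 / 2), (e.1.1 / 2, e.1.2 / 2 - 1)}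
  else {((e.1.1 + 1) / 2 - 1, (e.1.2 - 1) / 2), ((e.1.1 + 1) / 2, (e.1.2 - 1) / 2)}

/-- A contour `C ⊆ E(ℒ₁)` is incident to a set `D` of `ℒ₂`-vertices (Euclidean
distance `1`). -/
def ContourIncL2Cluster (C : Set BEdge) (D : Set (ℤ × ℤ)) : Prop :=
  ∃ e ∈ C, ∃ v ∈ sepVerts e, v ∈ D

/-! ### Auxiliary machinery for Statement 11 -/

/-- The horizontal contour edge crossing the vertical `G`-edge from `(a,m)` to `(a,m+1)`. -/
def vFace (a m : ℤ) : BEdge := ((if Even (a + m) then a else a - 1, m), true)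

/-- The vertical contour edge crossing the horizontal `G`-edge from `(a,m)` to `(a+1,m)`. -/
def hFace (a m : ℤ) : BEdge := ((a, if Even (a + m) then m else m - 1), false)

lemma zadj_cases {u v : ℤ × ℤ} (h : ZAdj u v) :
    v = (u.1 + 1, u.2) ∨ v = (u.1 - 1, u.2) ∨ v = (u.1, u.2 + 1) ∨ v = (u.1, u.2 - 1) := by
  unfold ZAdj at h
  rcases abs_cases (u.1 - v.1) with ⟨h1, _⟩ | ⟨h1, _⟩ <;>
    rcases abs_cases (u.2 - v.2) with ⟨h2, _⟩ | ⟨h2, _⟩ <;>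
  · rcases u with ⟨a, b⟩; rcases v with ⟨c, d⟩
    simp only [Prod.mk.injEq, Prod.ext_iff] at *
    omega

lemma zadj_symm {u v : ℤ × ℤ} (h : ZAdj u v) : ZAdj v u := by
  unfold ZAdj at *; rw [abs_sub_comm, abs_sub_comm v.2]; exact h

lemma zadj_up (a m : ℤ) : ZAdj (a, m) (a, m + 1) := by
  unfold ZAdj; simp

lemma zadj_right (a m : ℤ) : ZAdj (a, m) (a + 1, m) := by
  unfold ZAdj; simp

lemma crossesG_vFace (a m : ℤ) : crossesG (vFace a m) (a, m) (a, m + 1) := by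
  refine ⟨zadj_up a m, ?_⟩
  unfold vFace
  by_cases h : Even (a + m) <;> simp [h] <;> [left; right] <;> constructor <;> ring

lemma crossesG_hFace (a m : ℤ) : crossesG (hFace a m) (a, m) (a + 1, m) := by
  refine ⟨zadj_right a m, ?_⟩
  unfold hFace
  by_cases h : Even (a + m) <;> simp [h] <;> [left; right] <;> constructor <;> ring

lemma isBlackFace_vFace (a m : ℤ) : IsBlackFace (vFace a m).1 := by
  unfold vFace IsBlackFace
  by_cases h : Even (a + m)
  · rw [if_pos h]; exact h
  · rw [if_neg h]
    have h' : (a + m) % 2 = 1 := Int.odd_iff.mp (Int.not_even_iff_odd.mp h)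
    show Even (a - 1 + m)
    rw [Int.even_iff]; omega

lemma isBlackFace_hFace (a m : ℤ) : IsBlackFace (hFace a m).1 := by
  unfold hFace IsBlackFace
  by_cases h : Even (a + m)
  · rw [if_pos h]; exact h
  · rw [if_neg h]
    have h' : (a + m) % 2 = 1 := Int.odd_iff.mp (Int.not_even_iff_odd.mp h)
    show Even (a + (m - 1))
    rw [Int.even_iff]; omega

lemma black_of_present {ω : Config} {e : BEdge} (h : contourCfg ω e = true) :
    IsBlackFace e.1 := by
  by_contra hb; unfold contourCfg at h; rw [if_neg hb] at h; exact Bool.false_ne_true h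

lemma cross_unique_v {e : BEdge} (hb : IsBlackFace e.1) {a m : ℤ}
    (h : crossesG e (a, m) (a, m + 1)) : e = vFace a m := by
  obtain ⟨⟨c, d⟩, b⟩ := e
  unfold IsBlackFace at hb
  rw [Int.even_iff] at hb
  obtain ⟨_, h⟩ := h
  unfold vFace
  by_cases he : Even (a + m)
  all_goals
    first
      | rw [if_pos he]
      | rw [if_neg he]
  all_goals
    cases b <;>
    simp only [ite_true, ite_false, Bool.false_eq_true, Bool.true_eq_false,
      Prod.mk.injEq, Prod.ext_iff, and_true, true_and, false_and, and_false] at h hb ⊢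
  · omega
  · have he' := Int.even_iff.mp he; omega
  · omega
  · have he' := Int.odd_iff.mp (Int.not_even_iff_odd.mp he); omega

lemma cross_unique_h {e : BEdge} (hb : IsBlackFace e.1) {a m : ℤ}
    (h : crossesG e (a, m) (a + 1, m)) : e = hFace a m := by
  obtain ⟨⟨c, d⟩, b⟩ := e
  unfold IsBlackFace at hb
  rw [Int.even_iff] at hb
  obtain ⟨_, h⟩ := h
  unfold hFace
  by_cases he : Even (a + m)
  all_goals
    first
      | rw [if_pos he]
      | rw [if_neg he]
  all_goals
    cases b <;>
    simp only [ite_true, ite_false, Bool.false_eq_true, Bool.true_eq_false,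
      Prod.mk.injEq, Prod.ext_iff, and_true, true_and, false_and, and_false] at h hb ⊢
  · have he' := Int.even_iff.mp he; omega
  · omega
  · have he' := Int.odd_iff.mp (Int.not_even_iff_odd.mp he); omega
  · omega
lemma present_vFace {ω : Config} (hω : Constrained ω) (a m : ℤ) :
    contourCfg ω (vFace a m) = (ω (a, m) != ω (a, m + 1)) := by
  by_cases he : Even (a + m)
  · unfold vFace contourCfg IsBlackFace
    rw [if_pos he]
    simp only [ite_true]
    rw [if_pos he]
  · have hb : Even (a - 1 + m) := by
      rw [Int.even_iff]; have := Int.not_even_iff.mp he; omega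
    unfold vFace contourCfg IsBlackFace
    rw [if_neg he]
    simp only [ite_true]
    rw [if_pos hb]
    have hc := hω (a - 1) m hb
    have ha : a - 1 + 1 = a := by ring
    rw [ha] at hc
    rcases hc with ⟨h1, h2⟩ | ⟨h1, h2⟩ <;> rw [h1, h2] <;> simp [bne_self_eq_false]

lemma present_hFace {ω : Config} (hω : Constrained ω) (a m : ℤ) :
    contourCfg ω (hFace a m) = (ω (a, m) != ω (a + 1, m)) := by
  by_cases he : Even (a + m)
  · unfold hFace contourCfg IsBlackFace
    rw [if_pos he]
    simp only [ite_false, Bool.false_eq_true, if_false]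
    rw [if_pos he]
  · have hb : Even (a + (m - 1)) := by
      rw [Int.even_iff]; have := Int.not_even_iff.mp he; omega
    unfold hFace contourCfg IsBlackFace
    rw [if_neg he]
    simp only [ite_false, Bool.false_eq_true, if_false]
    rw [if_pos hb]
    have hc := hω a (m - 1) hb
    have ha : m - 1 + 1 = m := by ring
    rw [ha] at hc
    rcases hc with ⟨h1, h2⟩ | ⟨h1, h2⟩ <;> rw [h1, h2] <;> simp [bne_self_eq_false]

/-! ### Contour component machinery -/

lemma present_of_mem_contourB {φ : BEdge → Bool} {e₀ e : BEdge} (h0 : φ e₀ = true)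
    (h : e ∈ contourB φ e₀) : φ e = true := by
  induction h with
  | refl => exact h0
  | tail _ hstep _ => exact hstep.2.1

lemma present_of_mem {φ : BEdge → Bool} {C : Set BEdge} (hC : IsContourB φ C) {e : BEdge}
    (h : e ∈ C) : φ e = true := by
  obtain ⟨e₀, h0, rfl⟩ := hC
  exact present_of_mem_contourB h0 h

lemma shareEnd_symm {e₁ e₂ : BEdge} (h : shareEnd e₁ e₂) : shareEnd e₂ e₁ := by
  unfold shareEnd at *; tauto

lemma mem_closure {φ : BEdge → Bool} {C : Set BEdge} (hC : IsContourB φ C) {e e' : BEdge}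
    (h : e ∈ C) (h' : φ e' = true) (hs : shareEnd e e') : e' ∈ C := by
  obtain ⟨e₀, h0, rfl⟩ := hC
  exact Relation.ReflTransGen.tail h ⟨present_of_mem_contourB h0 h, h', hs⟩

lemma rtg_symm {α : Type*} {r : α → α → Prop} (hr : ∀ a b, r a b → r b a) {a b : α}
    (h : Relation.ReflTransGen r a b) : Relation.ReflTransGen r b a := by
  induction h with
  | refl => exact Relation.ReflTransGen.refl
  | tail _ hstep ih =>
      exact Relation.ReflTransGen.trans (Relation.ReflTransGen.single (hr _ _ hstep)) ih

lemma contour_eq_of_mem {φ : BEdge → Bool} {C : Set BEdge} (hC : IsContourB φ C) {e : BEdge}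
    (h : e ∈ C) : C = contourB φ e := by
  obtain ⟨e₀, h0, rfl⟩ := hC
  have hsym : ∀ a b : BEdge, (φ a = true ∧ φ b = true ∧ shareEnd a b) →
      (φ b = true ∧ φ a = true ∧ shareEnd b a) := fun a b ⟨x, y, z⟩ => ⟨y, x, shareEnd_symm z⟩
  ext e'
  constructor
  · intro h'
    exact Relation.ReflTransGen.trans (rtg_symm hsym h) h'
  · intro h'
    exact Relation.ReflTransGen.trans h h'

lemma isContour_contourB {ω : Config} {e : BEdge} (h : contourCfg ω e = true) :
    IsContour ω (contourB (contourCfg ω) e) := ⟨e, h, rfl⟩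

lemma self_mem_contourB {φ : BEdge → Bool} (e : BEdge) : e ∈ contourB φ e :=
  Relation.ReflTransGen.refl
/-! ### Face evenness -/

def hasEnd (e : BEdge) (c : ℤ × ℤ) : Prop := (edgeEnds e).1 = c ∨ (edgeEnds e).2 = c

lemma shareEnd_of_hasEnd {e f : BEdge} {c : ℤ × ℤ} (he : hasEnd e c) (hf : hasEnd f c) :
    shareEnd e f := by
  unfold hasEnd at he hf
  unfold shareEnd
  rcases he with he | he <;> rcases hf with hf | hf <;> rw [he, hf] <;> tauto

lemma hasEnd_vFace_left {m n : ℤ} (h : ¬ Even (m + n)) :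
    hasEnd (vFace m n) (2 * m + 1, 2 * n + 1) := by
  unfold vFace hasEnd edgeEnds
  rw [if_neg h]
  right
  simp only [ite_true, Prod.mk.injEq]
  simp only [and_true, true_and]; ring

lemma hasEnd_vFace_right {m n : ℤ} (h : ¬ Even (m + n)) :
    hasEnd (vFace (m + 1) n) (2 * m + 1, 2 * n + 1) := by
  have h' : Even (m + 1 + n) := by
    rw [Int.even_iff]; have := Int.not_even_iff.mp h; omega
  unfold vFace hasEnd edgeEnds
  rw [if_pos h']
  left
  simp only [ite_true, Prod.mk.injEq]
  simp only [and_true, true_and]; ring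

lemma hasEnd_hFace_bot {m n : ℤ} (h : ¬ Even (m + n)) :
    hasEnd (hFace m n) (2 * m + 1, 2 * n + 1) := by
  unfold hFace hasEnd edgeEnds
  rw [if_neg h]
  right
  simp only [ite_false, Bool.false_eq_true, Prod.mk.injEq]
  simp only [and_true, true_and]; ring

lemma hasEnd_hFace_top {m n : ℤ} (h : ¬ Even (m + n)) :
    hasEnd (hFace m (n + 1)) (2 * m + 1, 2 * n + 1) := by
  have h' : Even (m + (n + 1)) := by
    rw [Int.even_iff]; have := Int.not_even_iff.mp h; omega
  unfold hFace hasEnd edgeEnds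
  rw [if_pos h']
  left
  simp only [ite_false, Bool.false_eq_true, Prod.mk.injEq]
  simp only [and_true, true_and]; ring

/-- Indicator of a proposition. -/
noncomputable def ind (P : Prop) : ℕ := if P then 1 else 0

lemma ind_pos {P : Prop} (h : P) : ind P = 1 := if_pos h
lemma ind_neg {P : Prop} (h : ¬ P) : ind P = 0 := if_neg h
lemma ind_le_one (P : Prop) : ind P ≤ 1 := by
  unfold ind; split <;> omega

lemma face_even {ω : Config} (hω : Constrained ω) {C : Set BEdge} (hC : IsContour ω C)
    (m n : ℤ) :
    Even (ind (vFace m n ∈ C) + ind (vFace (m + 1) n ∈ C) +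
      ind (hFace m n ∈ C) + ind (hFace m (n + 1) ∈ C)) := by
  by_cases hpar : Even (m + n)
  · -- black face: opposite sides are crossed by the same contour edge
    have hpar' : ¬ Even (m + 1 + n) := by
      rw [Int.not_even_iff]; have := Int.even_iff.mp hpar; omega
    have hpar'' : ¬ Even (m + (n + 1)) := by
      rw [Int.not_even_iff]; have := Int.even_iff.mp hpar; omega
    have h1 : vFace (m + 1) n = vFace m n := by
      unfold vFace; rw [if_pos hpar, if_neg hpar']; norm_num
    have h2 : hFace m (n + 1) = hFace m n := by
      unfold hFace; rw [if_pos hpar, if_neg hpar'']; norm_num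
    rw [h1, h2]
    exact ⟨ind (vFace m n ∈ C) + ind (hFace m n ∈ C), by ring⟩
  · -- white face: the four candidate edges all meet at the centre
    set ctr : ℤ × ℤ := (2 * m + 1, 2 * n + 1) with hctr
    have e1 := hasEnd_vFace_left hpar
    have e2 := hasEnd_vFace_right hpar
    have e3 := hasEnd_hFace_bot hpar
    have e4 := hasEnd_hFace_top hpar
    by_cases hall : vFace m n ∈ C ∨ vFace (m + 1) n ∈ C ∨ hFace m n ∈ C ∨ hFace m (n + 1) ∈ C
    · have hmem : ∀ g : BEdge, hasEnd g ctr → contourCfg ω g = true → g ∈ C := by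
        intro g hg hg'
        rcases hall with h | h | h | h
        · exact mem_closure hC h hg' (shareEnd_of_hasEnd e1 hg)
        · exact mem_closure hC h hg' (shareEnd_of_hasEnd e2 hg)
        · exact mem_closure hC h hg' (shareEnd_of_hasEnd e3 hg)
        · exact mem_closure hC h hg' (shareEnd_of_hasEnd e4 hg)
      have i1 : (vFace m n ∈ C) ↔ (contourCfg ω (vFace m n) = true) :=
        ⟨present_of_mem hC, hmem _ e1⟩
      have i2 : (vFace (m + 1) n ∈ C) ↔ (contourCfg ω (vFace (m + 1) n) = true) :=
        ⟨present_of_mem hC, hmem _ e2⟩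
      have i3 : (hFace m n ∈ C) ↔ (contourCfg ω (hFace m n) = true) :=
        ⟨present_of_mem hC, hmem _ e3⟩
      have i4 : (hFace m (n + 1) ∈ C) ↔ (contourCfg ω (hFace m (n + 1)) = true) :=
        ⟨present_of_mem hC, hmem _ e4⟩
      unfold ind
      rw [if_congr i1 rfl rfl, if_congr i2 rfl rfl, if_congr i3 rfl rfl, if_congr i4 rfl rfl,
        present_vFace hω, present_vFace hω, present_hFace hω, present_hFace hω]
      cases h1 : ω (m, n) <;> cases h2 : ω (m + 1, n) <;> cases h3 : ω (m, n + 1) <;>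
        cases h4 : ω (m + 1, n + 1) <;> simp [h1, h2, h3, h4] <;> decide
    · push_neg at hall
      obtain ⟨n1, n2, n3, n4⟩ := hall
      simp [ind_neg, n1, n2, n3, n4]
/-! ### The parity function σ -/

def raySet (C : Set BEdge) (v : ℤ × ℤ) : Set ℕ := {k | vFace v.1 (v.2 + (k : ℤ)) ∈ C}

lemma vFace_snd (a m : ℤ) : (vFace a m).1.2 = m := by
  unfold vFace; simp

lemma hFace_fst (a m : ℤ) : (hFace a m).1.1 = a := by
  unfold hFace; simp

lemma raySet_finite {C : Set BEdge} (hC : C.Finite) (v : ℤ × ℤ) : (raySet C v).Finite := by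
  have hinj : Function.Injective (fun k : ℕ => vFace v.1 (v.2 + (k : ℤ))) := by
    intro k k' h
    have := congrArg (fun e : BEdge => e.1.2) h
    simp only [vFace_snd] at this
    omega
  exact Set.Finite.preimage hinj.injOn hC

def sig (C : Set BEdge) (v : ℤ × ℤ) : Prop := Even (raySet C v).ncard

lemma raySet_up (C : Set BEdge) (a b : ℤ) :
    Nat.succ '' raySet C (a, b + 1) = raySet C (a, b) \ {0} := by
  ext k
  simp only [Set.mem_image, raySet, Set.mem_setOf_eq, Set.mem_diff, Set.mem_singleton_iff]
  constructor
  · rintro ⟨j, hj, rfl⟩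
    have hcast : b + ((j.succ : ℕ) : ℤ) = b + 1 + (j : ℤ) := by push_cast; ring
    rw [hcast]
    exact ⟨hj, Nat.succ_ne_zero j⟩
  · rintro ⟨hk, hk0⟩
    obtain ⟨j, rfl⟩ := Nat.exists_eq_succ_of_ne_zero hk0
    refine ⟨j, ?_, rfl⟩
    have hcast : b + 1 + (j : ℤ) = b + ((j.succ : ℕ) : ℤ) := by push_cast; ring
    rw [hcast]
    exact hk

lemma zero_mem_raySet_iff (C : Set BEdge) (a b : ℤ) :
    0 ∈ raySet C (a, b) ↔ vFace a b ∈ C := by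
  simp [raySet]

lemma sig_step_up {C : Set BEdge} (hC : C.Finite) (a b : ℤ) :
    ((sig C (a, b) ↔ sig C (a, b + 1)) ↔ vFace a b ∉ C) := by
  have h1 : (raySet C (a, b + 1)).ncard = (raySet C (a, b) \ {0}).ncard := by
    rw [← raySet_up C a b, Set.ncard_image_of_injective _ Nat.succ_injective]
  by_cases h0 : vFace a b ∈ C
  · have hm : (0 : ℕ) ∈ raySet C (a, b) := (zero_mem_raySet_iff C a b).mpr h0
    have h2 : (raySet C (a, b) \ {0}).ncard + 1 = (raySet C (a, b)).ncard :=
      Set.ncard_diff_singleton_add_one hm (raySet_finite hC _)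
    unfold sig
    constructor
    · intro hiff
      exfalso
      rcases Nat.even_or_odd ((raySet C (a, b)).ncard) with he | ho
      · have := hiff.mp he
        rw [h1] at this
        obtain ⟨u, hu⟩ := he; obtain ⟨w, hw⟩ := this
        omega
      · have hne : ¬ Even ((raySet C (a, b)).ncard) := Nat.not_even_iff_odd.mpr ho
        have : Even ((raySet C (a, b + 1)).ncard) := by
          rw [h1]
          rcases Nat.even_or_odd ((raySet C (a, b) \ {0}).ncard) with he2 | ho2
          · exact he2
          · exfalso; obtain ⟨w, hw⟩ := ho2
            exact hne ⟨w + 1, by omega⟩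
        have := hiff.mpr this
        exact hne this
    · intro hmem; exact absurd h0 hmem
  · have h2 : raySet C (a, b) \ {0} = raySet C (a, b) := by
      apply Set.diff_singleton_eq_self
      rw [zero_mem_raySet_iff]; exact h0
    rw [h2] at h1
    unfold sig
    constructor
    · intro _; exact h0
    · intro _; rw [h1]

lemma exists_bound {C : Set BEdge} (hC : C.Finite) :
    ∃ Bd : ℤ, 0 ≤ Bd ∧ ∀ e ∈ C, |e.1.1| ≤ Bd ∧ |e.1.2| ≤ Bd := by
  obtain ⟨M, hM⟩ := (hC.image (fun e : BEdge => max |e.1.1| |e.1.2|)).bddAbove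
  refine ⟨max M 0, le_max_right _ _, fun e he => ?_⟩
  have h := hM (Set.mem_image_of_mem _ he)
  constructor
  · exact le_trans (le_trans (le_max_left _ _) h) (le_max_left _ _)
  · exact le_trans (le_trans (le_max_right _ _) h) (le_max_left _ _)
lemma raySet_ncard_eq_sum {C : Set BEdge} (hC : C.Finite) (a b : ℤ) {K : ℕ}
    (hK : ∀ e ∈ C, e.1.2 < b + K) :
    (raySet C (a, b)).ncard = ∑ k ∈ Finset.range K, ind (vFace a (b + (k : ℤ)) ∈ C) := by
  classical
  have hset : raySet C (a, b)
      = (((Finset.range K).filter (fun k : ℕ => vFace a (b + (k : ℤ)) ∈ C) : Finset ℕ) : Set ℕ) := by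
    ext k
    simp only [raySet, Set.mem_setOf_eq, Finset.coe_filter, Finset.mem_range]
    constructor
    · intro h
      refine ⟨?_, h⟩
      have := hK _ h
      rw [vFace_snd] at this
      omega
    · exact fun h => h.2
  rw [hset, Set.ncard_coe_finset, Finset.card_filter]
  exact Finset.sum_congr rfl fun k _ => by
    by_cases h : vFace a (b + (k : ℤ)) ∈ C <;> simp [ind, h]

lemma strip_even {ω : Config} (hω : Constrained ω) {C : Set BEdge} (hC : IsContour ω C)
    (a b : ℤ) (t : ℕ) :
    Even ((∑ k ∈ Finset.range t, ind (vFace a (b + (k : ℤ)) ∈ C)) +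
      (∑ k ∈ Finset.range t, ind (vFace (a + 1) (b + (k : ℤ)) ∈ C)) +
      ind (hFace a b ∈ C) + ind (hFace a (b + (t : ℤ)) ∈ C)) := by
  induction t with
  | zero =>
      simp only [Finset.range_zero, Finset.sum_empty, Nat.cast_zero, add_zero, zero_add]
      exact ⟨_, rfl⟩
  | succ t ih =>
      have hface := face_even hω hC a (b + (t : ℤ))
      have hcast : b + (t : ℤ) + 1 = b + ((t + 1 : ℕ) : ℤ) := by push_cast; ring
      rw [hcast] at hface
      rw [Finset.sum_range_succ, Finset.sum_range_succ]
      obtain ⟨u, hu⟩ := ih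
      obtain ⟨w, hw⟩ := hface
      exact ⟨u + w - ind (hFace a (b + (t : ℤ)) ∈ C), by omega⟩

lemma sig_step_right {ω : Config} (hω : Constrained ω) {C : Set BEdge} (hC : IsContour ω C)
    (hfin : C.Finite) (a b : ℤ) :
    ((sig C (a, b) ↔ sig C (a + 1, b)) ↔ hFace a b ∉ C) := by
  obtain ⟨Bd, hBd0, hBd⟩ := exists_bound hfin
  set K : ℕ := (Bd + 2 - b).toNat with hKdef
  have hKbig : Bd + 2 ≤ b + K := by
    rw [hKdef]; omega
  have hK1 : ∀ e ∈ C, e.1.2 < b + K := fun e he => by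
    have h2 := (hBd e he).2; rw [abs_le] at h2; omega
  have hA := raySet_ncard_eq_sum hfin a b hK1
  have hB := raySet_ncard_eq_sum hfin (a + 1) b hK1
  have hHK : hFace a (b + (K : ℤ)) ∉ C := by
    intro hmem
    have h2 := (hBd _ hmem).2
    rw [abs_le, hFace] at h2
    by_cases hp : Even (a + (b + (K : ℤ))) <;> simp [hp] at h2 <;> omega
  have hstrip := strip_even hω hC a b K
  rw [ind_neg hHK, add_zero] at hstrip
  unfold sig
  rw [hA, hB]
  obtain ⟨w, hw⟩ := hstrip
  set S1 := ∑ k ∈ Finset.range K, ind (vFace a (b + (k : ℤ)) ∈ C) with hS1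
  set S2 := ∑ k ∈ Finset.range K, ind (vFace (a + 1) (b + (k : ℤ)) ∈ C) with hS2
  clear_value S1 S2
  by_cases hm : hFace a b ∈ C
  · rw [ind_pos hm] at hw
    constructor
    · intro hiff
      exfalso
      rcases Nat.even_or_odd S1 with he | ho
      · obtain ⟨v, hv⟩ := hiff.mp he
        obtain ⟨u, hu⟩ := he
        omega
      · obtain ⟨u, hu⟩ := ho
        have hS2even : Even S2 := ⟨w - u - 1, by omega⟩
        obtain ⟨v, hv⟩ := hiff.mpr hS2even
        omega
    · intro hmem; exact absurd hm hmem
  · rw [ind_neg hm, add_zero] at hw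
    refine ⟨fun _ => hm, fun _ => ?_⟩
    constructor
    · intro ⟨u, hu⟩; exact ⟨w - u, by omega⟩
    · intro ⟨u, hu⟩; exact ⟨w - u, by omega⟩
/-! ### The canonical crossing edge -/

def Crossed (C : Set BEdge) (u v : ℤ × ℤ) : Prop := ∃ e ∈ C, crossesG e u v

def cEdge (u v : ℤ × ℤ) : BEdge :=
  if u.1 = v.1 then vFace u.1 (min u.2 v.2) else hFace (min u.1 v.1) u.2

lemma crossesG_symm {e : BEdge} {u v : ℤ × ℤ} (h : crossesG e u v) : crossesG e v u := by
  obtain ⟨h1, h2⟩ := h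
  refine ⟨zadj_symm h1, ?_⟩
  rw [add_comm v.1 u.1, add_comm v.2 u.2]
  exact h2

lemma crossed_symm {C : Set BEdge} {u v : ℤ × ℤ} (h : Crossed C u v) : Crossed C v u := by
  obtain ⟨e, he, hc⟩ := h; exact ⟨e, he, crossesG_symm hc⟩

lemma cEdge_cases {u v : ℤ × ℤ} (huv : ZAdj u v) :
    (v = (u.1, u.2 + 1) ∧ cEdge u v = vFace u.1 u.2) ∨
    (v = (u.1, u.2 - 1) ∧ cEdge u v = vFace u.1 (u.2 - 1)) ∨
    (v = (u.1 + 1, u.2) ∧ cEdge u v = hFace u.1 u.2) ∨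
    (v = (u.1 - 1, u.2) ∧ cEdge u v = hFace (u.1 - 1) u.2) := by
  rcases zadj_cases huv with h | h | h | h
  · right; right; left
    refine ⟨h, ?_⟩
    rw [h]; unfold cEdge
    simp only [Prod.fst, Prod.snd]
    rw [if_neg (by omega : ¬ u.1 = u.1 + 1)]
    congr 1
    omega
  · right; right; right
    refine ⟨h, ?_⟩
    rw [h]; unfold cEdge
    simp only [Prod.fst, Prod.snd]
    rw [if_neg (by omega : ¬ u.1 = u.1 - 1)]
    congr 1
    omega
  · left
    refine ⟨h, ?_⟩
    rw [h]; unfold cEdge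
    simp only [Prod.fst, Prod.snd]
    simp only [ite_true]
    congr 1
    omega
  · right; left
    refine ⟨h, ?_⟩
    rw [h]; unfold cEdge
    simp only [Prod.fst, Prod.snd]
    simp only [ite_true]
    congr 1
    omega

lemma cEdge_crosses {u v : ℤ × ℤ} (huv : ZAdj u v) : crossesG (cEdge u v) u v := by
  rcases cEdge_cases huv with ⟨hv, he⟩ | ⟨hv, he⟩ | ⟨hv, he⟩ | ⟨hv, he⟩ <;> rw [he, hv]
  · have := crossesG_vFace u.1 u.2
    convert this using 2 <;> simp
  · have := crossesG_symm (crossesG_vFace u.1 (u.2 - 1))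
    convert this using 2 <;> simp <;> omega
  · have := crossesG_hFace u.1 u.2
    convert this using 2 <;> simp
  · have := crossesG_symm (crossesG_hFace (u.1 - 1) u.2)
    convert this using 2 <;> simp <;> omega

lemma cEdge_present {ω : Config} (hω : Constrained ω) {u v : ℤ × ℤ} (huv : ZAdj u v) :
    contourCfg ω (cEdge u v) = (ω u != ω v) := by
  have heta : (u.1, u.2) = u := Prod.mk.eta
  rcases cEdge_cases huv with ⟨hv, he⟩ | ⟨hv, he⟩ | ⟨hv, he⟩ | ⟨hv, he⟩ <;> rw [he, hv]
  · rw [present_vFace hω, heta]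
  · rw [present_vFace hω]
    have h1 : u.2 - 1 + 1 = u.2 := by ring
    rw [h1, heta]
    cases ω u <;> cases ω (u.1, u.2 - 1) <;> simp
  · rw [present_hFace hω, heta]
  · rw [present_hFace hω]
    have h1 : u.1 - 1 + 1 = u.1 := by ring
    rw [h1, heta]
    cases ω u <;> cases ω (u.1 - 1, u.2) <;> simp

lemma cEdge_unique {ω : Config} {e : BEdge} (hp : contourCfg ω e = true) {u v : ℤ × ℤ}
    (huv : ZAdj u v) (hc : crossesG e u v) : e = cEdge u v := by
  have hb := black_of_present hp
  rcases cEdge_cases huv with ⟨hv, he⟩ | ⟨hv, he⟩ | ⟨hv, he⟩ | ⟨hv, he⟩ <;> rw [he] <;>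
    rw [hv] at hc
  · exact cross_unique_v hb (by convert hc using 2 <;> simp)
  · exact cross_unique_v hb (by
      have := crossesG_symm hc
      convert this using 2 <;> simp <;> omega)
  · exact cross_unique_h hb (by convert hc using 2 <;> simp)
  · exact cross_unique_h hb (by
      have := crossesG_symm hc
      convert this using 2 <;> simp <;> omega)

lemma crossed_iff_cEdge {ω : Config} {C : Set BEdge} (hC : IsContour ω C) {u v : ℤ × ℤ}
    (huv : ZAdj u v) : Crossed C u v ↔ cEdge u v ∈ C := by
  constructor
  · rintro ⟨e, heC, hc⟩
    rw [← cEdge_unique (present_of_mem hC heC) huv hc]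
    exact heC
  · intro h
    exact ⟨cEdge u v, h, cEdge_crosses huv⟩

lemma omega_ne_of_crossed {ω : Config} (hω : Constrained ω) {C : Set BEdge}
    (hC : IsContour ω C) {u v : ℤ × ℤ} (huv : ZAdj u v) (h : Crossed C u v) : ω u ≠ ω v := by
  have hm := (crossed_iff_cEdge hC huv).mp h
  have hp := present_of_mem hC hm
  rw [cEdge_present hω huv] at hp
  simp only [bne_iff_ne, ne_eq] at hp
  exact hp

lemma sig_step {ω : Config} (hω : Constrained ω) {C : Set BEdge} (hC : IsContour ω C)
    (hfin : C.Finite) {u v : ℤ × ℤ} (huv : ZAdj u v) :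
    ((sig C u ↔ sig C v) ↔ ¬ Crossed C u v) := by
  have hcr := crossed_iff_cEdge hC huv
  have heta : (u.1, u.2) = u := Prod.mk.eta
  rcases cEdge_cases huv with ⟨hv, he⟩ | ⟨hv, he⟩ | ⟨hv, he⟩ | ⟨hv, he⟩ <;>
      rw [he, hv] at hcr <;> rw [hv, not_iff_not.mpr hcr]
  · have h := sig_step_up hfin u.1 u.2
    rw [heta] at h
    exact h
  · have h := sig_step_up hfin u.1 (u.2 - 1)
    have h1 : u.2 - 1 + 1 = u.2 := by ring
    rw [h1, heta] at h
    exact iff_comm.trans h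
  · have h := sig_step_right hω hC hfin u.1 u.2
    rw [heta] at h
    exact h
  · have h := sig_step_right hω hC hfin (u.1 - 1) u.2
    have h1 : u.1 - 1 + 1 = u.1 := by ring
    rw [h1, heta] at h
    exact iff_comm.trans h
/-! ### σ is trivial far away and constant on clusters -/

lemma vFace_fst_cases (a m : ℤ) : (vFace a m).1.1 = a ∨ (vFace a m).1.1 = a - 1 := by
  unfold vFace; split <;> simp

lemma hFace_snd_cases (a m : ℤ) : (hFace a m).1.2 = m ∨ (hFace a m).1.2 = m - 1 := by
  unfold hFace; split <;> simp

lemma sig_of_empty {C : Set BEdge} {w : ℤ × ℤ}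
    (h : ∀ k : ℕ, vFace w.1 (w.2 + (k : ℤ)) ∉ C) : sig C w := by
  have : raySet C w = ∅ := by
    ext k; simp only [raySet, Set.mem_setOf_eq, Set.mem_empty_iff_false, iff_false]
    exact h k
  unfold sig
  rw [this, Set.ncard_empty]
  exact Even.zero

lemma sig_far {ω : Config} (hω : Constrained ω) {C : Set BEdge} (hC : IsContour ω C)
    (hfin : C.Finite) {Bd : ℤ} (hBd0 : 0 ≤ Bd)
    (hBd : ∀ e ∈ C, |e.1.1| ≤ Bd ∧ |e.1.2| ≤ Bd) {w : ℤ × ℤ}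
    (hw : Bd + 2 ≤ |w.1| ∨ Bd + 2 ≤ |w.2|) : sig C w := by
  -- if the first coordinate is large, the upward ray misses C
  have hcol : ∀ z : ℤ × ℤ, Bd + 2 ≤ |z.1| → sig C z := by
    intro z hz
    apply sig_of_empty
    intro k hmem
    have h1 := abs_le.mp (hBd _ hmem).1
    rcases abs_cases z.1 with ⟨ha, _⟩ | ⟨ha, _⟩ <;> rw [ha] at hz <;>
      rcases vFace_fst_cases z.1 (z.2 + (k : ℤ)) with h | h <;> rw [h] at h1 <;> omega
  rcases hw with hw1 | hw2
  · exact hcol w hw1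
  · rcases abs_cases w.2 with ⟨ha, _⟩ | ⟨ha, _⟩ <;> rw [ha] at hw2
    · -- w.2 large positive: the ray misses C
      apply sig_of_empty
      intro k hmem
      have h1 := abs_le.mp (hBd _ hmem).2
      rw [vFace_snd] at h1
      omega
    · -- w.2 large negative: walk right below C to a safe column
      have hstep : ∀ t : ℤ, (sig C (t, w.2) ↔ sig C (t + 1, w.2)) := by
        intro t
        rw [sig_step_right hω hC hfin t w.2]
        intro hmem
        have h1 := abs_le.mp (hBd _ hmem).2
        rcases hFace_snd_cases t w.2 with h | h <;> rw [h] at h1 <;> omega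
      have hwalk : ∀ j : ℕ, (sig C (w.1, w.2) ↔ sig C (w.1 + (j : ℤ), w.2)) := by
        intro j
        induction j with
        | zero => simp
        | succ j ih =>
            have := hstep (w.1 + (j : ℤ))
            rw [ih, this]
            have hc : w.1 + (j : ℤ) + 1 = w.1 + ((j + 1 : ℕ) : ℤ) := by push_cast; ring
            rw [hc]
      set j : ℕ := (Bd + 2 - w.1).toNat with hj
      have hsig := (hwalk j).mpr (hcol (w.1 + (j : ℤ), w.2) (by
        have : Bd + 2 ≤ w.1 + (j : ℤ) ∨ True := by left; rw [hj]; omega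
        rcases abs_cases (w.1 + (j : ℤ)) with ⟨hb, _⟩ | ⟨hb, _⟩ <;> simp only [Prod.fst] <;>
          rw [hb] <;> rw [hj] at * <;> omega))
      have heta : (w.1, w.2) = w := Prod.mk.eta
      rw [heta] at hsig
      exact hsig

lemma sig_eq_of_sameCluster {ω : Config} (hω : Constrained ω) {C : Set BEdge}
    (hC : IsContour ω C) (hfin : C.Finite) {u v : ℤ × ℤ} (h : SameCluster ω u v) :
    (sig C u ↔ sig C v) := by
  induction h with
  | refl => exact Iff.rfl
  | tail _ hstep ih =>
      obtain ⟨hadj, hsame⟩ := hstep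
      have hnc : ¬ Crossed C _ _ := fun hcr => omega_ne_of_crossed hω hC hadj hcr hsame
      exact ih.trans ((sig_step hω hC hfin hadj).mpr hnc)

lemma sig_of_infinite_cluster {ω : Config} (hω : Constrained ω) {C : Set BEdge}
    (hC : IsContour ω C) (hfin : C.Finite) {x : ℤ × ℤ} (hx : (cluster ω x).Infinite) :
    sig C x := by
  obtain ⟨Bd, hBd0, hBd⟩ := exists_bound hfin
  have hbox : ¬ (cluster ω x ⊆ Set.Icc (-(Bd + 1), -(Bd + 1)) (Bd + 1, Bd + 1)) := by
    intro hsub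
    exact hx (Set.Finite.subset (Set.finite_Icc _ _) hsub)
  obtain ⟨z, hz, hznot⟩ := Set.not_subset.mp hbox
  have hzfar : Bd + 2 ≤ |z.1| ∨ Bd + 2 ≤ |z.2| := by
    rw [Set.mem_Icc, Prod.le_def, Prod.le_def] at hznot
    push_neg at hznot
    rcases abs_cases z.1 with ⟨h1, _⟩ | ⟨h1, _⟩ <;> rcases abs_cases z.2 with ⟨h2, _⟩ | ⟨h2, _⟩ <;>
      rw [h1, h2] <;> simp only [Prod.fst, Prod.snd] at hznot <;> omega
  have h1 := sig_eq_of_sameCluster hω hC hfin (hz : SameCluster ω x z)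
  exact h1.mpr (sig_far hω hC hfin hBd0 hBd hzfar)
/-! ### Parity along a path -/

lemma crossing_parity {ω : Config} (hω : Constrained ω) {C : Set BEdge}
    (hC : IsContour ω C) (hfin : C.Finite) (q : ℕ → ℤ × ℤ) (n : ℕ)
    (hadj : ∀ i, i < n → ZAdj (q i) (q (i + 1))) :
    (Even (((Finset.range n).filter (fun i => Crossed C (q i) (q (i + 1)))).card) ↔
      (sig C (q 0) ↔ sig C (q n))) := by
  induction n with
  | zero => simp
  | succ n ih =>
      have ih' := ih (fun i hi => hadj i (by omega))
      have hstep := sig_step hω hC hfin (hadj n (by omega))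
      rw [Finset.range_add_one, Finset.filter_insert]
      by_cases hcr : Crossed C (q n) (q (n + 1))
      · rw [if_pos hcr, Finset.card_insert_of_notMem (by simp)]
        rw [Nat.even_add_one]
        have hne : ¬ (sig C (q n) ↔ sig C (q (n + 1))) := fun hcc => (hstep.mp hcc) hcr
        tauto
      · rw [if_neg hcr]
        have heq : (sig C (q n) ↔ sig C (q (n + 1))) := hstep.mpr hcr
        tauto

lemma bool_flip {x y z : Bool} (h : x ≠ y) : (z = y) ↔ ¬ (z = x) := by
  cases x <;> cases y <;> cases z <;> simp_all

lemma flip_parity (ω : Config) (q : ℕ → ℤ × ℤ) (n : ℕ) :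
    (Even (((Finset.range n).filter (fun i => ω (q i) ≠ ω (q (i + 1)))).card) ↔
      (ω (q 0) = ω (q n))) := by
  induction n with
  | zero => simp
  | succ n ih =>
      rw [Finset.range_add_one, Finset.filter_insert]
      by_cases hne : ω (q n) ≠ ω (q (n + 1))
      · rw [if_pos hne, Finset.card_insert_of_notMem (by simp), Nat.even_add_one]
        rw [bool_flip hne]
        tauto
      · rw [if_neg hne]
        push_neg at hne
        rw [hne] at ih
        exact ih

/-! ### The link between state flips and contour crossings -/

lemma link {ω : Config} (hω : Constrained ω) {u v : ℤ × ℤ} (huv : ZAdj u v) :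
    ((ω u ≠ ω v) ↔
      ((∃ C, IsContour ω C ∧ C.Infinite ∧ ∃ e ∈ C, crossesG e u v) ∨
       (∃ C, IsContour ω C ∧ C.Finite ∧ ∃ e ∈ C, crossesG e u v))) ∧
    ¬ ((∃ C, IsContour ω C ∧ C.Infinite ∧ ∃ e ∈ C, crossesG e u v) ∧
       (∃ C, IsContour ω C ∧ C.Finite ∧ ∃ e ∈ C, crossesG e u v)) := by
  constructor
  · constructor
    · intro hne
      have hp : contourCfg ω (cEdge u v) = true := by
        rw [cEdge_present hω huv]
        exact bne_iff_ne.mpr hne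
      rcases Set.finite_or_infinite (contourB (contourCfg ω) (cEdge u v)) with hf | hi
      · exact Or.inr ⟨_, isContour_contourB hp, hf,
          cEdge u v, self_mem_contourB _, cEdge_crosses huv⟩
      · exact Or.inl ⟨_, isContour_contourB hp, hi,
          cEdge u v, self_mem_contourB _, cEdge_crosses huv⟩
    · rintro (⟨C, hC, _, e, heC, hcross⟩ | ⟨C, hC, _, e, heC, hcross⟩) <;>
      · have hp := present_of_mem hC heC
        have := cEdge_unique hp huv hcross
        rw [this] at hp
        rw [cEdge_present hω huv] at hp
        exact bne_iff_ne.mp hp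
  · rintro ⟨⟨C₁, hC₁, hinf, e₁, he₁, hx₁⟩, ⟨C₂, hC₂, hfin, e₂, he₂, hx₂⟩⟩
    have hp₁ := present_of_mem hC₁ he₁
    have hp₂ := present_of_mem hC₂ he₂
    have h1 := cEdge_unique hp₁ huv hx₁
    have h2 := cEdge_unique hp₂ huv hx₂
    have hCeq : C₁ = C₂ := by
      rw [contour_eq_of_mem hC₁ he₁, contour_eq_of_mem hC₂ he₂, h1, h2]
    rw [hCeq] at hinf
    exact hinf hfin
/-! ### Finite contours are crossed evenly -/

lemma finite_crossings_even {ω : Config} (hω : Constrained ω) (q : ℕ → ℤ × ℤ) (n : ℕ)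
    (hadjq : ∀ i, i < n → ZAdj (q i) (q (i + 1)))
    (hs0 : ∀ C : Set BEdge, IsContour ω C → C.Finite → sig C (q 0))
    (hsn : ∀ C : Set BEdge, IsContour ω C → C.Finite → sig C (q n)) :
    Even (((Finset.range n).filter (fun i =>
      ∃ C, IsContour ω C ∧ C.Finite ∧ ∃ e ∈ C, crossesG e (q i) (q (i + 1)))).card) := by
  classical
  set φ := contourCfg ω with hφ
  set FinP : ℕ → Prop := fun i =>
    ∃ C, IsContour ω C ∧ C.Finite ∧ ∃ e ∈ C, crossesG e (q i) (q (i + 1)) with hFinP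
  set g : ℕ → Set BEdge := fun i => contourB φ (cEdge (q i) (q (i + 1))) with hg
  set F : Finset ℕ := (Finset.range n).filter FinP with hF
  have hmapsto : ∀ i ∈ F, g i ∈ F.image g := fun i hi => Finset.mem_image_of_mem g hi
  rw [Finset.card_eq_sum_card_fiberwise hmapsto]
  apply Finset.even_sum
  intro Cc hCc
  obtain ⟨i₀, hi₀F, hgi₀⟩ := Finset.mem_image.mp hCc
  obtain ⟨hi₀r, hi₀P⟩ := Finset.mem_filter.mp hi₀F
  obtain ⟨C', hC', hfin', e', he', hx'⟩ := hi₀P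
  have hadj₀ := hadjq i₀ (Finset.mem_range.mp hi₀r)
  have he'c : e' = cEdge (q i₀) (q (i₀ + 1)) := cEdge_unique (present_of_mem hC' he') hadj₀ hx'
  have hCcC' : Cc = C' := by
    rw [← hgi₀, hg]
    simp only
    rw [← he'c, ← contour_eq_of_mem hC' he']
  have hCcContour : IsContour ω Cc := hCcC' ▸ hC'
  have hCcFin : Cc.Finite := hCcC' ▸ hfin'
  have hfe : F.filter (fun i => g i = Cc)
      = (Finset.range n).filter (fun i => Crossed Cc (q i) (q (i + 1))) := by
    rw [hF, Finset.filter_filter]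
    apply Finset.filter_congr
    intro i hi
    have hadji := hadjq i (Finset.mem_range.mp hi)
    show FinP i ∧ g i = Cc ↔ _
    rw [hFinP]
    constructor
    · rintro ⟨⟨C'', hC'', hfin'', e'', he'', hx''⟩, hgiCc⟩
      have he''c : e'' = cEdge (q i) (q (i + 1)) :=
        cEdge_unique (present_of_mem hC'' he'') hadji hx''
      have : C'' = Cc := by
        rw [← hgiCc, hg]
        simp only
        rw [← he''c, ← contour_eq_of_mem hC'' he'']
      rw [← this]
      exact ⟨e'', he'', hx''⟩
    · rintro ⟨e, heC, hx⟩
      have hec : e = cEdge (q i) (q (i + 1)) :=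
        cEdge_unique (present_of_mem hCcContour heC) hadji hx
      have hgi : g i = Cc := by
        rw [hg]
        simp only
        rw [← hec, ← contour_eq_of_mem hCcContour heC]
      exact ⟨⟨Cc, hCcContour, hCcFin, e, heC, hx⟩, hgi⟩
  rw [hfe]
  exact (crossing_parity hω hCcContour hCcFin q n hadjq).mpr
    (iff_of_true (hs0 Cc hCcContour hCcFin) (hsn Cc hCcContour hCcFin))
/-- Lemma 2.8 of the paper: a lattice path from an infinite 0-cluster
to an infinite 1-cluster crosses infinite contours an odd number of times; in
particular, there exists an infinite contour. -/
theorem path_crosses_infinite_contours_oddly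
    (ω : Config) (hω : Constrained ω) (x y : ℤ × ℤ)
    (hx0 : ω x = false) (hxi : (cluster ω x).Infinite)
    (hy1 : ω y = true) (hyi : (cluster ω y).Infinite)
    (n : ℕ) (p : Fin (n + 1) → ℤ × ℤ) (hp0 : p 0 = x) (hpn : p (Fin.last n) = y)
    (hadj : ∀ i : Fin n, ZAdj (p i.castSucc) (p i.succ)) :
    Odd (Finset.univ.filter (fun i : Fin n =>
        ∃ C, IsContour ω C ∧ C.Infinite ∧ ∃ e ∈ C, crossesG e (p i.castSucc) (p i.succ))).card ∧
    ∃ C, IsContour ω C ∧ C.Infinite := by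
  classical
  set q : ℕ → ℤ × ℤ := fun i => p ⟨min i n, Nat.lt_succ_of_le (min_le_right i n)⟩ with hqdef
  have hq0 : q 0 = x := by
    rw [← hp0, hqdef]
    show p _ = p 0
    congr 1
  have hqn : q n = y := by
    rw [← hpn, hqdef]
    show p _ = p (Fin.last n)
    congr 1
    apply Fin.ext
    simp [Fin.last]
  have hqc : ∀ i : Fin n, q i.val = p i.castSucc := by
    intro i
    rw [hqdef]
    show p _ = p i.castSucc
    congr 1
    apply Fin.ext
    simp [min_eq_left (le_of_lt i.isLt)]
  have hqs : ∀ i : Fin n, q (i.val + 1) = p i.succ := by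
    intro i
    rw [hqdef]
    show p _ = p i.succ
    congr 1
    apply Fin.ext
    simp [min_eq_left (Nat.succ_le_of_lt i.isLt)]
  have hadjq : ∀ i, i < n → ZAdj (q i) (q (i + 1)) := by
    intro i hi
    have := hadj ⟨i, hi⟩
    rw [hqc ⟨i, hi⟩, hqs ⟨i, hi⟩]
    exact this
  -- the three counts
  set InfP : ℕ → Prop := fun i =>
    ∃ C, IsContour ω C ∧ C.Infinite ∧ ∃ e ∈ C, crossesG e (q i) (q (i + 1)) with hInfP
  set FinP : ℕ → Prop := fun i =>
    ∃ C, IsContour ω C ∧ C.Finite ∧ ∃ e ∈ C, crossesG e (q i) (q (i + 1)) with hFinP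
  -- total parity is odd
  have hodd : ¬ Even (((Finset.range n).filter (fun i => ω (q i) ≠ ω (q (i + 1)))).card) := by
    rw [flip_parity ω q n, hq0, hqn, hx0, hy1]
    simp
  -- split the flips into infinite-contour and finite-contour crossings
  have hsplit : (Finset.range n).filter (fun i => ω (q i) ≠ ω (q (i + 1)))
      = ((Finset.range n).filter InfP) ∪ ((Finset.range n).filter FinP) := by
    rw [← Finset.filter_or]
    apply Finset.filter_congr
    intro i hi
    exact (link hω (hadjq i (Finset.mem_range.mp hi))).1
  have hdisj : Disjoint ((Finset.range n).filter InfP) ((Finset.range n).filter FinP) := by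
    rw [Finset.disjoint_left]
    intro i hi1 hi2
    obtain ⟨hir, hInf⟩ := Finset.mem_filter.mp hi1
    obtain ⟨_, hFin⟩ := Finset.mem_filter.mp hi2
    exact (link hω (hadjq i (Finset.mem_range.mp hir))).2 ⟨hInf, hFin⟩
  have hcard : (((Finset.range n).filter (fun i => ω (q i) ≠ ω (q (i + 1)))).card)
      = ((Finset.range n).filter InfP).card + ((Finset.range n).filter FinP).card := by
    rw [hsplit, Finset.card_union_of_disjoint hdisj]
  -- finite-contour crossings are even
  have hfinEven : Even (((Finset.range n).filter FinP).card) := by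
    apply finite_crossings_even hω q n hadjq
    · intro C hC hfin
      rw [hq0]
      exact sig_of_infinite_cluster hω hC hfin hxi
    · intro C hC hfin
      rw [hqn]
      exact sig_of_infinite_cluster hω hC hfin hyi
  -- hence infinite-contour crossings are odd
  have hInfOdd : Odd (((Finset.range n).filter InfP).card) := by
    rw [← Nat.not_even_iff_odd]
    intro hEv
    apply hodd
    rw [hcard]
    exact hEv.add hfinEven
  -- transfer the count to `Fin n`
  have htrans : (Finset.univ.filter (fun i : Fin n =>
      ∃ C, IsContour ω C ∧ C.Infinite ∧ ∃ e ∈ C, crossesG e (p i.castSucc) (p i.succ))).card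
      = ((Finset.range n).filter InfP).card := by
    apply Finset.card_bij (fun (i : Fin n) _ => (i : ℕ))
    · intro i hi
      obtain ⟨-, hP⟩ := Finset.mem_filter.mp hi
      rw [Finset.mem_filter, Finset.mem_range]
      refine ⟨i.isLt, ?_⟩
      have hrfl : InfP i.val ↔
          ∃ C, IsContour ω C ∧ C.Infinite ∧ ∃ e ∈ C, crossesG e (q i.val) (q (i.val + 1)) :=
        Iff.rfl
      rw [hrfl, hqc i, hqs i]
      exact hP
    · intro i _ j _ hij
      exact Fin.ext hij
    · intro j hj
      obtain ⟨hjr, hP⟩ := Finset.mem_filter.mp hj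
      have hjn := Finset.mem_range.mp hjr
      refine ⟨⟨j, hjn⟩, ?_, rfl⟩
      rw [Finset.mem_filter]
      refine ⟨Finset.mem_univ _, ?_⟩
      have hrfl : InfP j ↔
          ∃ C, IsContour ω C ∧ C.Infinite ∧ ∃ e ∈ C, crossesG e (q j) (q (j + 1)) := Iff.rfl
      rw [hrfl] at hP
      show ∃ C, IsContour ω C ∧ C.Infinite ∧
        ∃ e ∈ C, crossesG e (p (Fin.castSucc ⟨j, hjn⟩)) (p (Fin.succ ⟨j, hjn⟩))
      rw [← hqc ⟨j, hjn⟩, ← hqs ⟨j, hjn⟩]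
      exact hP
  constructor
  · rw [htrans]
    exact hInfOdd
  · -- the filter is nonempty, giving an infinite contour
    have hne : ((Finset.range n).filter InfP).Nonempty := by
      rw [← Finset.card_pos]
      rcases hInfOdd with ⟨k, hk⟩
      omega
    obtain ⟨i, hi⟩ := hne
    obtain ⟨-, C, hC, hinf, -⟩ := Finset.mem_filter.mp hi
    exact ⟨C, hC, hinf⟩

end CP

end
end

section
/- Let k be a positive integer and let μ be a probability measure on the constrained configuration space Ω satisfying (Ak1). Then μ-almost surely no contour of φ(ω) has more than two ends. -/
open scoped Classical ENNReal
open MeasureTheory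

noncomputable section

namespace CP

/-! ### Auxiliary development for Statement 12 -/

section Aux

open Relation

/-- The set of present contour edges. -/
def SOf (ω : Config) : Set BEdge := {e | contourCfg ω e = true}

/-- The step relation of the edge-adjacency graph restricted to `S`. -/
@[reducible] def erel (S : Set BEdge) (a b : BEdge) : Prop := a ∈ S ∧ b ∈ S ∧ shareEnd a b

lemma compIn_eq (S : Set BEdge) (e : BEdge) :
    compIn S e = {e' | ReflTransGen (erel S) e e'} := rfl

lemma shareEnd_symm_s12 {a b : BEdge} (h : shareEnd a b) : shareEnd b a := by
  unfold shareEnd at *; tauto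

lemma erel_symm (S : Set BEdge) : Symmetric (erel S) := by
  intro a b ⟨ha, hb, hs⟩; exact ⟨hb, ha, shareEnd_symm_s12 hs⟩

lemma mem_compIn_self (S : Set BEdge) (e : BEdge) : e ∈ compIn S e :=
  ReflTransGen.refl

lemma compIn_mono {S T : Set BEdge} (h : S ⊆ T) (e : BEdge) :
    compIn S e ⊆ compIn T e := fun _ hx =>
  ReflTransGen.mono (fun _ _ ⟨ha, hb, hs⟩ => ⟨h ha, h hb, hs⟩) _ _ hx

lemma mem_S_of_mem_compIn {S : Set BEdge} {e e' : BEdge} (he : e ∈ S)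
    (h : e' ∈ compIn S e) : e' ∈ S := by
  induction h with
  | refl => exact he
  | tail _ hbc _ => exact hbc.2.1

lemma compIn_comm {S : Set BEdge} {e e' : BEdge} (h : e' ∈ compIn S e) :
    e ∈ compIn S e' := (@Std.Symm.symm _ _ (@ReflTransGen.stdSymm _ _ ⟨fun _ _ h => erel_symm S h⟩) _ _) h

lemma compIn_eq_of_mem {S : Set BEdge} {e e' : BEdge} (h : e' ∈ compIn S e) :
    compIn S e' = compIn S e := by
  ext x
  constructor
  · intro hx; exact ReflTransGen.trans h hx
  · intro hx; exact ReflTransGen.trans (compIn_comm h) hx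

lemma compIn_trans {S : Set BEdge} {e e' x : BEdge} (h : e' ∈ compIn S e)
    (hx : x ∈ compIn S e') : x ∈ compIn S e := ReflTransGen.trans h hx

end Aux
section Geom

open Relation

/-- Both coordinates are bounded by `M`. -/
def small (M : ℤ) (e : BEdge) : Prop := |e.1.1| ≤ M ∧ |e.1.2| ≤ M

lemma shareEnd_close {a b : BEdge} (h : shareEnd a b) :
    |b.1.1 - a.1.1| ≤ 2 ∧ |b.1.2 - a.1.2| ≤ 2 := by
  obtain ⟨⟨ax, ay⟩, da⟩ := a
  obtain ⟨⟨bx, by'⟩, db⟩ := b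
  cases da <;> cases db <;>
    simp only [shareEnd, edgeEnds, if_true, if_false, Bool.false_eq_true,
      Prod.mk.injEq] at h <;>
  · simp only [abs_le] at *
    constructor <;> constructor <;> omega

lemma small_of_step {M : ℤ} {a b : BEdge} (h : shareEnd a b) (ha : small M a) :
    small (M + 2) b := by
  obtain ⟨h1, h2⟩ := shareEnd_close h
  simp only [abs_le] at h1 h2
  simp only [small, abs_le] at ha ⊢
  omega

lemma small_mono {M M' : ℤ} (h : M ≤ M') {e : BEdge} (he : small M e) : small M' e :=
  ⟨he.1.trans h, he.2.trans h⟩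

lemma small_finite (M : ℤ) : {e : BEdge | small M e}.Finite := by
  apply Set.Finite.subset (Finset.finite_toSet
    ((Finset.Icc ((-M, -M) : ℤ × ℤ) ((M, M) : ℤ × ℤ)) ×ˢ (Finset.univ : Finset Bool)))
  intro e he
  simp only [small, abs_le, Set.mem_setOf_eq] at he
  simp only [Finset.coe_product, Set.mem_prod, Finset.mem_coe, Finset.mem_Icc,
    Finset.coe_univ, Set.mem_univ, and_true, Prod.le_def]
  omega

/-- A connected set reaching from inside the box of radius `M` to outside it
must contain an edge in the annulus `M < ‖·‖ ≤ M + 2`. -/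
lemma cross_annulus {S : Set BEdge} {e b : BEdge} {M : ℤ}
    (h : b ∈ compIn S e) (he : small M e) (hb : ¬ small M b) :
    ∃ w ∈ compIn S e, w ∈ S ∧ ¬ small M w ∧ small (M + 2) w := by
  induction h with
  | refl => exact absurd he hb
  | @tail c d hec hcd ih =>
    by_cases hc : small M c
    · exact ⟨d, hec.tail hcd, hcd.2.1, hb, small_of_step hcd.2.2 hc⟩
    · obtain ⟨w, hw1, hw2, hw3, hw4⟩ := ih hc
      exact ⟨w, hw1, hw2, hw3, hw4⟩

lemma exists_far_of_infinite {S : Set BEdge} {e : BEdge} (M : ℤ)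
    (h : (compIn S e).Infinite) : ∃ b ∈ compIn S e, ¬ small M b := by
  by_contra hc
  push_neg at hc
  exact h (Set.Finite.subset (small_finite M) hc)

lemma annulus_elt_of_infinite {S : Set BEdge} {e : BEdge} {M : ℤ}
    (h : (compIn S e).Infinite) (he : small M e) :
    ∃ w ∈ compIn S e, w ∈ S ∧ ¬ small M w ∧ small (M + 2) w := by
  obtain ⟨b, hb, hbfar⟩ := exists_far_of_infinite M h
  exact cross_annulus hb he hbfar

end Geom
section Conn

open Relation

lemma compIn_sub_of_mem {S G : Set BEdge} {e x : BEdge} (hx : x ∈ compIn S e) :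
    compIn (S \ G) x ⊆ compIn S e := by
  intro y hy
  exact compIn_trans hx (compIn_mono Set.diff_subset x hy)

lemma adj_finite_single (g : BEdge) : {b : BEdge | shareEnd g b}.Finite := by
  apply Set.Finite.subset (Finset.finite_toSet
    ((Finset.Icc (g.1 - (2, 2)) (g.1 + (2, 2))) ×ˢ (Finset.univ : Finset Bool)))
  intro b hb
  obtain ⟨h1, h2⟩ := shareEnd_close (hb : shareEnd g b)
  simp only [abs_le] at h1 h2
  simp only [Finset.coe_product, Set.mem_prod, Finset.mem_coe, Finset.mem_Icc,
    Finset.coe_univ, Set.mem_univ, and_true, Prod.le_def, Prod.fst_sub, Prod.snd_sub,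
    Prod.fst_add, Prod.snd_add]
  omega

lemma reach_decomp {S G : Set BEdge} {e x : BEdge} (h : x ∈ compIn S e) :
    x ∉ G →
    (e ∉ G ∧ x ∈ compIn (S \ G) e) ∨
      ∃ a, (∃ g ∈ G, shareEnd g a) ∧ a ∉ G ∧ x ∈ compIn (S \ G) a := by
  induction h with
  | refl => intro hx; exact Or.inl ⟨hx, ReflTransGen.refl⟩
  | @tail b c hxb hbc ih =>
    intro hc
    by_cases hbG : b ∈ G
    · exact Or.inr ⟨c, ⟨b, hbG, hbc.2.2⟩, hc, ReflTransGen.refl⟩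
    · rcases ih hbG with ⟨heG, hcomp⟩ | ⟨a, hadj, haG, hcomp⟩
      · exact Or.inl ⟨heG, hcomp.tail ⟨⟨hbc.1, hbG⟩, ⟨hbc.2.1, hc⟩, hbc.2.2⟩⟩
      · exact Or.inr ⟨a, hadj, haG, hcomp.tail ⟨⟨hbc.1, hbG⟩, ⟨hbc.2.1, hc⟩, hbc.2.2⟩⟩

/-- Removing a finite set of edges from an infinite component leaves some
infinite component inside it. -/
lemma exists_infinite_sub (S : Set BEdge) (G : Finset BEdge) {e : BEdge}
    (hinf : (compIn S e).Infinite) :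
    ∃ x ∈ compIn S e, x ∉ (G : Set BEdge) ∧ (compIn (S \ ↑G) x).Infinite := by
  by_contra hcon
  push_neg at hcon
  have hAfin : (insert e {a : BEdge | ∃ g ∈ (G : Set BEdge), shareEnd g a}).Finite := by
    apply Set.Finite.insert
    have : {a : BEdge | ∃ g ∈ (G : Set BEdge), shareEnd g a} =
        ⋃ g ∈ (G : Set BEdge), {a | shareEnd g a} := by
      ext a; simp
    rw [this]
    exact Set.Finite.biUnion (G.finite_toSet) (fun g _ => adj_finite_single g)
  have hcover : compIn S e \ ↑G ⊆
      ⋃ a ∈ insert e {a : BEdge | ∃ g ∈ (G : Set BEdge), shareEnd g a},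
        (compIn (S \ ↑G) a ∩ (compIn S e \ ↑G)) := by
    intro x hx
    rcases reach_decomp hx.1 hx.2 with ⟨_, hcomp⟩ | ⟨a, hadj, _, hcomp⟩
    · exact Set.mem_biUnion (Set.mem_insert _ _) ⟨hcomp, hx⟩
    · exact Set.mem_biUnion (Set.mem_insert_of_mem _ hadj) ⟨hcomp, hx⟩
  have hfin : (compIn S e \ ↑G).Finite := by
    apply Set.Finite.subset (Set.Finite.biUnion hAfin ?_) hcover
    intro a _
    rcases Set.eq_empty_or_nonempty (compIn (S \ ↑G) a ∩ (compIn S e \ ↑G)) with hemp | ⟨x, hx⟩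
    · rw [hemp]; exact Set.finite_empty
    · have h1 : compIn (S \ ↑G) a = compIn (S \ ↑G) x := (compIn_eq_of_mem hx.1).symm
      have h2 : (compIn (S \ ↑G) x).Finite := by
        have := hcon x hx.2.1 hx.2.2
        exact this
      rw [h1]
      exact h2.inter_of_left _
  exact (hinf.diff (G.finite_toSet)) hfin

/-- `A` is connected as a set of edges. -/
def FConn (A : Set BEdge) : Prop := ∀ a ∈ A, ∀ b ∈ A, ReflTransGen (erel A) a b

lemma fconn_rtg_subset {A S : Set BEdge} (hA : A ⊆ S) (hconn : FConn A)
    {a b : BEdge} (ha : a ∈ A) (hb : b ∈ A) : ReflTransGen (erel S) a b :=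
  ReflTransGen.mono (fun _ _ ⟨h1, h2, h3⟩ => ⟨hA h1, hA h2, h3⟩) _ _ (hconn a ha b hb)

lemma chain_rtg_subset {S A : Set BEdge} :
    ∀ {a : BEdge} {l : List BEdge}, List.Chain (erel S) a l →
      (∀ x ∈ a :: l, x ∈ A) → ∀ x ∈ a :: l, ReflTransGen (erel A) a x := by
  intro a l
  induction l generalizing a with
  | nil =>
    intro _ _ x hx
    simp only [List.mem_singleton] at hx
    subst hx; exact ReflTransGen.refl
  | cons b l ih =>
    intro hch hmem x hx
    rw [List.Chain, List.chain_cons] at hch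
    rcases List.mem_cons.mp hx with rfl | hx'
    · exact ReflTransGen.refl
    · have hstep : erel A a b :=
        ⟨hmem a (by simp), hmem b (by simp), hch.1.2.2⟩
      have := ih hch.2 (fun y hy => hmem y (List.mem_cons_of_mem _ hy)) x hx'
      exact ReflTransGen.head hstep this

/-- First-hit decomposition: a path from `x ∉ F` to `f ∈ F` produces an edge in the
component of `x` in `S \ F` adjacent to `F`. -/
lemma first_hit {S F : Set BEdge} {x f : BEdge} (h : ReflTransGen (erel S) x f)
    (hx : x ∉ F) (hf : f ∈ F) :
    ∃ y z, y ∈ compIn (S \ F) x ∧ z ∈ F ∧ z ∈ S ∧ shareEnd y z := by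
  have key : ∀ {c}, ReflTransGen (erel S) x c →
      (c ∉ F ∧ c ∈ compIn (S \ F) x) ∨
        (∃ y z, y ∈ compIn (S \ F) x ∧ z ∈ F ∧ z ∈ S ∧ shareEnd y z) := by
    intro c h
    induction h with
    | refl => exact Or.inl ⟨hx, ReflTransGen.refl⟩
    | @tail b c hxb hbc ih =>
      rcases ih with ⟨hbF, hbcomp⟩ | hw
      · by_cases hcF : c ∈ F
        · exact Or.inr ⟨b, c, hbcomp, hcF, hbc.2.1, hbc.2.2⟩
        · exact Or.inl ⟨hcF, hbcomp.tail ⟨⟨hbc.1, hbF⟩, ⟨hbc.2.1, hcF⟩, hbc.2.2⟩⟩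
      · exact Or.inr hw
  rcases key h with ⟨hfF, _⟩ | hw
  · exact absurd hf hfF
  · exact hw

/-- Trifurcation structure: a finite connected core `F` inside the cluster of `e₁`
whose removal leaves at least three distinct infinite components. -/
def Trif (S : Set BEdge) (F : Finset BEdge) (e₁ e₂ e₃ : BEdge) : Prop :=
  F.Nonempty ∧ (F : Set BEdge) ⊆ S ∧ FConn (F : Set BEdge) ∧
    (F : Set BEdge) ⊆ compIn S e₁ ∧
    e₁ ∈ S ∧ e₂ ∈ S ∧ e₃ ∈ S ∧
    e₁ ∉ (F : Set BEdge) ∧ e₂ ∉ (F : Set BEdge) ∧ e₃ ∉ (F : Set BEdge) ∧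
    e₂ ∈ compIn S e₁ ∧ e₃ ∈ compIn S e₁ ∧
    (compIn (S \ ↑F) e₁).Infinite ∧ (compIn (S \ ↑F) e₂).Infinite ∧
      (compIn (S \ ↑F) e₃).Infinite ∧
    e₂ ∉ compIn (S \ ↑F) e₁ ∧ e₃ ∉ compIn (S \ ↑F) e₁ ∧ e₃ ∉ compIn (S \ ↑F) e₂

end Conn
section Reduction

open Relation

lemma compIn_lift_avoid {S F : Set BEdge} {x y : BEdge}
    (hF : ∀ z ∈ compIn S x, z ∉ F) (h : y ∈ compIn S x) :
    y ∈ compIn (S \ F) x := by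
  induction h with
  | refl => exact ReflTransGen.refl
  | @tail b c hxb hbc ih =>
    exact ih.tail ⟨⟨hbc.1, hF b hxb⟩, ⟨hbc.2.1, hF c (hxb.tail hbc)⟩, hbc.2.2⟩

lemma compIn_diff_subset_congr {S F F' : Set BEdge} {x : BEdge}
    (h : ∀ y ∈ compIn S x, y ∈ F' → y ∈ F) :
    compIn (S \ F) x ⊆ compIn (S \ F') x := by
  intro y hy
  induction hy with
  | refl => exact ReflTransGen.refl
  | @tail b c hxb hbc ih =>
    have hbS : b ∈ compIn S x := compIn_mono Set.diff_subset x hxb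
    have hcS : c ∈ compIn S x := compIn_mono Set.diff_subset x (hxb.tail hbc)
    exact ih.tail ⟨⟨hbc.1.1, fun hc => hbc.1.2 (h b hbS hc)⟩,
      ⟨hbc.2.1.1, fun hc => hbc.2.1.2 (h c hcS hc)⟩, hbc.2.2⟩

lemma compIn_diff_congr {S F F' : Set BEdge} {x : BEdge}
    (h : ∀ y ∈ compIn S x, (y ∈ F ↔ y ∈ F')) :
    compIn (S \ F) x = compIn (S \ F') x :=
  Set.Subset.antisymm
    (compIn_diff_subset_congr (fun y hy hy' => (h y hy).mpr hy'))
    (compIn_diff_subset_congr (fun y hy hy' => (h y hy).mp hy'))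

lemma compIn_cluster_restrict {S F : Set BEdge} {e₀ x : BEdge} (he₀ : e₀ ∈ S)
    (hx : x ∈ compIn S e₀) :
    compIn (compIn S e₀ \ F) x = compIn (S \ F) x := by
  apply Set.Subset.antisymm
  · refine compIn_mono ?_ x
    intro y hy
    exact ⟨mem_S_of_mem_compIn he₀ hy.1, hy.2⟩
  · intro y hy
    induction hy with
    | refl => exact ReflTransGen.refl
    | @tail b c hxb hbc ih =>
      have hbC : b ∈ compIn S e₀ :=
        compIn_trans hx (compIn_mono Set.diff_subset x hxb)
      have hcC : c ∈ compIn S e₀ :=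
        compIn_trans hx (compIn_mono Set.diff_subset x (hxb.tail hbc))
      exact ih.tail ⟨⟨hbC, hbc.1.2⟩, ⟨hcC, hbc.2.1.2⟩, hbc.2.2⟩

lemma compIn_disjoint {S : Set BEdge} {a b : BEdge} (h : compIn S a ≠ compIn S b) :
    Disjoint (compIn S a) (compIn S b) := by
  rw [Set.disjoint_left]
  intro x hxa hxb
  exact h ((compIn_eq_of_mem hxa).symm.trans (compIn_eq_of_mem hxb))

lemma chain_mem_S {S : Set BEdge} :
    ∀ {a : BEdge} {l : List BEdge}, List.Chain (erel S) a l → a ∈ S →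
      ∀ x ∈ a :: l, x ∈ S := by
  intro a l
  induction l generalizing a with
  | nil =>
    intro _ ha x hx
    simp only [List.mem_singleton] at hx; subst hx; exact ha
  | cons b l ih =>
    intro hch ha x hx
    rw [List.Chain, List.chain_cons] at hch
    rcases List.mem_cons.mp hx with rfl | hx'
    · exact ha
    · exact ih hch.2 hch.1.2.1 x hx'

/-- Reduction: a contour with more than two ends yields a trifurcation structure. -/
lemma trif_of_bad {ω : Config} (h : ∃ C, IsContour ω C ∧ ¬AtMostTwoEnds C) :
    ∃ (F : Finset BEdge) (e₁ e₂ e₃ : BEdge), Trif (SOf ω) F e₁ e₂ e₃ := by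
  classical
  obtain ⟨C, ⟨e₀, hφ, hC⟩, hnot⟩ := h
  set S : Set BEdge := SOf ω with hS
  have he₀S : e₀ ∈ S := hφ
  have hCS : C = compIn S e₀ := hC
  rw [AtMostTwoEnds] at hnot
  push_neg at hnot
  obtain ⟨F₀, hF₀fin, e₁, e₂, e₃, hm₁, hm₂, hm₃, hi₁, hi₂, hi₃, hdist⟩ := hnot
  have hdist12 : compIn (C \ F₀) e₁ ≠ compIn (C \ F₀) e₂ := fun hh => hdist.1 hh
  have hdist13 : compIn (C \ F₀) e₁ ≠ compIn (C \ F₀) e₃ := fun hh => hdist.2.1 hh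
  have hdist23 : compIn (C \ F₀) e₂ ≠ compIn (C \ F₀) e₃ := fun hh => hdist.2.2 hh
  have he₁C : e₁ ∈ compIn S e₀ := hCS ▸ hm₁.1
  have he₂C : e₂ ∈ compIn S e₀ := hCS ▸ hm₂.1
  have he₃C : e₃ ∈ compIn S e₀ := hCS ▸ hm₃.1
  set F₁ : Set BEdge := F₀ ∩ compIn S e₀ with hF₁
  have hF₁fin : F₁.Finite := hF₀fin.inter_of_left _
  have hcomp_eq : ∀ x, x ∈ compIn S e₀ →
      compIn (C \ F₀) x = compIn (S \ F₁) x := by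
    intro x hx
    rw [hCS, compIn_cluster_restrict he₀S hx]
    apply compIn_diff_congr
    intro y hy
    have hyC : y ∈ compIn S e₀ := by
      rw [compIn_eq_of_mem hx] at hy; exact hy
    exact ⟨fun hyF => ⟨hyF, hyC⟩, fun hyF => hyF.1⟩
  have hF₁ne : F₁.Nonempty := by
    rcases Set.eq_empty_or_nonempty F₁ with hemp | hne
    · exfalso
      have hSid : S \ F₁ = S := by rw [hemp, Set.diff_empty]
      have h1 : compIn (C \ F₀) e₁ = compIn S e₁ := by
        rw [hcomp_eq e₁ he₁C, hSid]
      have h2 : compIn (C \ F₀) e₂ = compIn S e₂ := by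
        rw [hcomp_eq e₂ he₂C, hSid]
      apply hdist12
      rw [h1, h2, compIn_eq_of_mem he₁C, compIn_eq_of_mem he₂C]
    · exact hne
  obtain ⟨f₀, hf₀⟩ := hF₁ne
  have hf₀C : f₀ ∈ compIn S e₀ := hf₀.2
  -- infinite components in `S \ F₁`
  have hK₁ : (compIn (S \ F₁) e₁).Infinite := by rw [← hcomp_eq e₁ he₁C]; exact hi₁
  have hK₂ : (compIn (S \ F₁) e₂).Infinite := by rw [← hcomp_eq e₂ he₂C]; exact hi₂
  have hK₃ : (compIn (S \ F₁) e₃).Infinite := by rw [← hcomp_eq e₃ he₃C]; exact hi₃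
  have hd12 : compIn (S \ F₁) e₁ ≠ compIn (S \ F₁) e₂ := by
    rw [← hcomp_eq e₁ he₁C, ← hcomp_eq e₂ he₂C]; exact hdist12
  have hd13 : compIn (S \ F₁) e₁ ≠ compIn (S \ F₁) e₃ := by
    rw [← hcomp_eq e₁ he₁C, ← hcomp_eq e₃ he₃C]; exact hdist13
  have hd23 : compIn (S \ F₁) e₂ ≠ compIn (S \ F₁) e₃ := by
    rw [← hcomp_eq e₂ he₂C, ← hcomp_eq e₃ he₃C]; exact hdist23
  -- connect `F₁` by paths
  have hconn0 : ∀ f, ∃ l : List BEdge, f ∈ F₁ →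
      List.Chain (erel S) f₀ l ∧ (f₀ :: l).getLast (List.cons_ne_nil _ _) = f := by
    intro f
    by_cases hf : f ∈ F₁
    · have hrtg : ReflTransGen (erel S) f₀ f :=
        ReflTransGen.trans ((@Std.Symm.symm _ _ (@ReflTransGen.stdSymm _ _ ⟨fun _ _ h => erel_symm S h⟩) _ _) hf₀C) hf.2
      obtain ⟨l, hl1, hl2⟩ := List.exists_isChain_cons_of_relationReflTransGen hrtg
      exact ⟨l, fun _ => ⟨hl1, hl2⟩⟩
    · exact ⟨[], fun hf' => absurd hf' hf⟩
  choose L hL using hconn0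
  set F'set : Set BEdge := F₁ ∪ ⋃ f ∈ F₁, {x | x ∈ f₀ :: L f} with hF'setdef
  have hF'fin : F'set.Finite :=
    hF₁fin.union (Set.Finite.biUnion hF₁fin (fun f _ => (f₀ :: L f).finite_toSet))
  set F' : Finset BEdge := hF'fin.toFinset with hF'def
  have hF'coe : (F' : Set BEdge) = F'set := hF'fin.coe_toFinset
  have hF₁sub : F₁ ⊆ F'set := Set.subset_union_left
  have hF'C : F'set ⊆ compIn S e₀ := by
    intro x hx
    rcases hx with hx | hx
    · exact hx.2
    · simp only [Set.mem_iUnion] at hx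
      obtain ⟨f, hf, hxl⟩ := hx
      have hf₀S : f₀ ∈ S := mem_S_of_mem_compIn he₀S hf₀C
      have hmem : ∀ y ∈ f₀ :: L f, y ∈ S := chain_mem_S (hL f hf).1 hf₀S
      have hrtg : ReflTransGen (erel S) f₀ x :=
        chain_rtg_subset (hL f hf).1 hmem x hxl
      exact compIn_trans hf₀C hrtg
  have hmemlist : ∀ x ∈ F'set, ∃ f ∈ F₁, x ∈ f₀ :: L f := by
    intro x hx
    rcases hx with hx | hx
    · have hlm := List.getLast_mem (l := f₀ :: L x) (List.cons_ne_nil _ _)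
      rw [(hL x hx).2] at hlm
      exact ⟨x, hx, hlm⟩
    · simp only [Set.mem_iUnion] at hx
      obtain ⟨f, hf, hxl⟩ := hx
      exact ⟨f, hf, hxl⟩
  have hFconn : FConn F'set := by
    have hto : ∀ x ∈ F'set, ReflTransGen (erel F'set) f₀ x := by
      intro x hx
      obtain ⟨f, hf, hxl⟩ := hmemlist x hx
      refine chain_rtg_subset (hL f hf).1 ?_ x hxl
      intro y hy
      exact Or.inr (Set.mem_biUnion hf hy)
    intro a ha b hb
    exact ReflTransGen.trans ((@Std.Symm.symm _ _ (@ReflTransGen.stdSymm _ _ ⟨fun _ _ h => erel_symm _ h⟩) _ _) (hto a ha)) (hto b hb)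
  have hdiffeq : (S \ F₁) \ (F' : Set BEdge) = S \ (F' : Set BEdge) := by
    rw [hF'coe, Set.diff_diff, Set.union_eq_right.mpr hF₁sub]
  -- find representatives avoiding F'
  have he₁S : e₁ ∈ S := mem_S_of_mem_compIn he₀S he₁C
  have he₂S : e₂ ∈ S := mem_S_of_mem_compIn he₀S he₂C
  have he₃S : e₃ ∈ S := mem_S_of_mem_compIn he₀S he₃C
  have he₁SF : e₁ ∈ S \ F₁ := ⟨he₁S, fun hh => hm₁.2 hh.1⟩
  have he₂SF : e₂ ∈ S \ F₁ := ⟨he₂S, fun hh => hm₂.2 hh.1⟩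
  have he₃SF : e₃ ∈ S \ F₁ := ⟨he₃S, fun hh => hm₃.2 hh.1⟩
  obtain ⟨x₁, hx₁K, hx₁G, hx₁inf⟩ := exists_infinite_sub (S \ F₁) F' hK₁
  obtain ⟨x₂, hx₂K, hx₂G, hx₂inf⟩ := exists_infinite_sub (S \ F₁) F' hK₂
  obtain ⟨x₃, hx₃K, hx₃G, hx₃inf⟩ := exists_infinite_sub (S \ F₁) F' hK₃
  rw [hdiffeq] at hx₁inf hx₂inf hx₃inf
  have hx₁SF : x₁ ∈ S \ F₁ := mem_S_of_mem_compIn he₁SF hx₁K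
  have hx₂SF : x₂ ∈ S \ F₁ := mem_S_of_mem_compIn he₂SF hx₂K
  have hx₃SF : x₃ ∈ S \ F₁ := mem_S_of_mem_compIn he₃SF hx₃K
  have hx₁C : x₁ ∈ compIn S e₀ :=
    compIn_trans he₁C (compIn_mono Set.diff_subset _ hx₁K)
  have hx₂C : x₂ ∈ compIn S e₀ :=
    compIn_trans he₂C (compIn_mono Set.diff_subset _ hx₂K)
  have hx₃C : x₃ ∈ compIn S e₀ :=
    compIn_trans he₃C (compIn_mono Set.diff_subset _ hx₃K)
  have hclass : compIn S x₁ = compIn S e₀ := compIn_eq_of_mem hx₁C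
  -- component subset facts
  have hFsubF' : F₁ ⊆ (F' : Set BEdge) := by rw [hF'coe]; exact hF₁sub
  have hsubK : ∀ x e, x ∈ compIn (S \ F₁) e →
      compIn (S \ ↑F') x ⊆ compIn (S \ F₁) e := by
    intro x e hx
    intro y hy
    refine compIn_trans hx ?_
    exact compIn_mono (Set.diff_subset_diff_right hFsubF') x hy
  refine ⟨F', x₁, x₂, x₃, ?_, ?_, ?_, ?_, hx₁SF.1, hx₂SF.1, hx₃SF.1, hx₁G, hx₂G, hx₃G,
    ?_, ?_, hx₁inf, hx₂inf, hx₃inf, ?_, ?_, ?_⟩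
  · exact ⟨f₀, hF'fin.mem_toFinset.mpr (hF₁sub hf₀)⟩
  · rw [hF'coe]; exact fun x hx => mem_S_of_mem_compIn he₀S (hF'C hx)
  · rw [hF'coe]; exact hFconn
  · rw [hF'coe, hclass]; exact hF'C
  · rw [hclass]; exact hx₂C
  · rw [hclass]; exact hx₃C
  · intro hmem
    have h1 : x₂ ∈ compIn (S \ F₁) e₁ := hsubK x₁ e₁ hx₁K hmem
    have h2 : x₂ ∈ compIn (S \ F₁) e₂ := hx₂K
    exact Set.disjoint_left.mp (compIn_disjoint hd12) h1 h2
  · intro hmem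
    have h1 : x₃ ∈ compIn (S \ F₁) e₁ := hsubK x₁ e₁ hx₁K hmem
    exact Set.disjoint_left.mp (compIn_disjoint hd13) h1 hx₃K
  · intro hmem
    have h1 : x₃ ∈ compIn (S \ F₁) e₂ := hsubK x₂ e₂ hx₂K hmem
    exact Set.disjoint_left.mp (compIn_disjoint hd23) h1 hx₃K

end Reduction
section Partition

variable {α : Type*} [DecidableEq α]

/-- A partition of the finite set `Y` into three nonempty parts. -/
def IsThreePart (Y : Finset α) (P : Finset (Finset α)) : Prop :=
  P.card = 3 ∧ (∀ A ∈ P, A.Nonempty) ∧ (∀ A ∈ P, A ⊆ Y) ∧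
    (∀ A ∈ P, ∀ B ∈ P, A ≠ B → Disjoint A B) ∧ (∀ y ∈ Y, ∃ A ∈ P, y ∈ A)

/-- Compatibility of two partitions. -/
def Compat (Y : Finset α) (P Q : Finset (Finset α)) : Prop :=
  ∃ A ∈ P, ∃ B ∈ Q, Y \ A ⊆ B

lemma compat_swap {Y : Finset α} {P Q : Finset (Finset α)} (h : Compat Y P Q) :
    Compat Y Q P := by
  obtain ⟨A, hA, B, hB, hsub⟩ := h
  refine ⟨B, hB, A, hA, ?_⟩
  intro y hy
  rw [Finset.mem_sdiff] at hy
  by_contra hyA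
  exact hy.2 (hsub (Finset.mem_sdiff.mpr ⟨hy.1, hyA⟩))

/-- The branch contraction step. -/
lemma branch_bound {Y B : Finset α} {a₀ : α} (ha₀Y : a₀ ∈ Y) (ha₀B : a₀ ∉ B)
    (hBY : B ⊆ Y) (hBne : B.Nonempty)
    (𝒮 : Finset (Finset (Finset α)))
    (h3 : ∀ Q ∈ 𝒮, IsThreePart Y Q)
    (hbig : ∀ Q ∈ 𝒮, ∃ P ∈ Q, Y \ P ⊆ B)
    (hcompat : ∀ P ∈ 𝒮, ∀ Q ∈ 𝒮, P ≠ Q → Compat Y P Q)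
    (IH : ∀ (Y' : Finset α) (ℱ' : Finset (Finset (Finset α))), ℱ'.card ≤ 𝒮.card →
      (∀ P ∈ ℱ', IsThreePart Y' P) →
      (∀ P ∈ ℱ', ∀ Q ∈ ℱ', P ≠ Q → Compat Y' P Q) → ℱ'.Nonempty →
        ℱ'.card + 2 ≤ Y'.card) :
    𝒮.card + 1 ≤ B.card := by
  rcases Finset.eq_empty_or_nonempty 𝒮 with rfl | h𝒮ne
  · simpa using Finset.card_pos.mpr hBne
  set φ : Finset α → Finset α := fun P => if P ⊆ B then P else insert a₀ (P ∩ B) with hφ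
  -- structure of parts
  have hsat : ∀ Q ∈ 𝒮, ∀ P ∈ Q, P ⊆ B ∨ (Y \ B ⊆ P ∧ a₀ ∈ P ∧ ¬P ⊆ B) := by
    intro Q hQ P hP
    obtain ⟨P₀, hP₀, hP₀B⟩ := hbig Q hQ
    obtain ⟨_, hne, hsubY, hdisj, _⟩ := h3 Q hQ
    by_cases hPP₀ : P = P₀
    · subst hPP₀
      right
      have h1 : Y \ B ⊆ P := by
        intro y hy
        rw [Finset.mem_sdiff] at hy
        by_contra hyP
        exact hy.2 (hP₀B (Finset.mem_sdiff.mpr ⟨hy.1, hyP⟩))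
      have h2 : a₀ ∈ P := h1 (Finset.mem_sdiff.mpr ⟨ha₀Y, ha₀B⟩)
      exact ⟨h1, h2, fun hc => ha₀B (hc h2)⟩
    · left
      intro y hy
      have hyY : y ∈ Y := hsubY P hP hy
      have hyP₀ : y ∉ P₀ := Finset.disjoint_left.mp (hdisj P hP P₀ hP₀ hPP₀) hy
      exact hP₀B (Finset.mem_sdiff.mpr ⟨hyY, hyP₀⟩)
  -- recovery function: φ is injective on saturated parts
  have hψ : ∀ Q ∈ 𝒮, ∀ P ∈ Q,
      (if a₀ ∈ φ P then ((φ P).erase a₀) ∪ (Y \ B) else φ P) = P := by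
    intro Q hQ P hP
    rcases hsat Q hQ P hP with hsmall | ⟨hYB, ha₀P, hnsub⟩
    · have : φ P = P := if_pos hsmall
      rw [this, if_neg (fun hc => ha₀B (hsmall hc))]
    · have hφP : φ P = insert a₀ (P ∩ B) := if_neg hnsub
      have ha₀PB : a₀ ∉ P ∩ B := fun hc => ha₀B (Finset.mem_inter.mp hc).2
      rw [hφP, if_pos (Finset.mem_insert_self _ _), Finset.erase_insert ha₀PB]
      ext y
      constructor
      · intro hy
        rcases Finset.mem_union.mp hy with hy | hy
        · exact (Finset.mem_inter.mp hy).1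
        · exact hYB hy
      · intro hy
        by_cases hyB : y ∈ B
        · exact Finset.mem_union_left _ (Finset.mem_inter.mpr ⟨hy, hyB⟩)
        · refine Finset.mem_union_right _ (Finset.mem_sdiff.mpr ⟨?_, hyB⟩)
          exact (h3 Q hQ).2.2.1 P hP hy
  have hφinj : ∀ Q ∈ 𝒮, ∀ P ∈ Q, ∀ P' ∈ Q, φ P = φ P' → P = P' := by
    intro Q hQ P hP P' hP' heq
    have := hψ Q hQ P hP
    rw [heq, hψ Q hQ P' hP'] at this
    exact this.symm
  -- the image partitions
  have hthree : ∀ Q ∈ 𝒮, IsThreePart (insert a₀ B) (Q.image φ) := by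
    intro Q hQ
    obtain ⟨hcard, hne, hsubY, hdisj, hcover⟩ := h3 Q hQ
    refine ⟨?_, ?_, ?_, ?_, ?_⟩
    · rw [Finset.card_image_of_injOn (fun P hP P' hP' => hφinj Q hQ P hP P' hP'), hcard]
    · intro A hA
      obtain ⟨P, hP, rfl⟩ := Finset.mem_image.mp hA
      rcases hsat Q hQ P hP with hsmall | ⟨_, _, hnsub⟩
      · rw [hφ]; simp only [if_pos hsmall]; exact hne P hP
      · rw [hφ]; simp only [if_neg hnsub]; exact ⟨a₀, Finset.mem_insert_self _ _⟩
    · intro A hA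
      obtain ⟨P, hP, rfl⟩ := Finset.mem_image.mp hA
      rcases hsat Q hQ P hP with hsmall | ⟨_, _, hnsub⟩
      · rw [hφ]; simp only [if_pos hsmall]
        exact hsmall.trans (Finset.subset_insert _ _)
      · rw [hφ]; simp only [if_neg hnsub]
        exact Finset.insert_subset_insert _ Finset.inter_subset_right
    · intro A hA A' hA' hne'
      obtain ⟨P, hP, rfl⟩ := Finset.mem_image.mp hA
      obtain ⟨P', hP', rfl⟩ := Finset.mem_image.mp hA'
      have hPP' : P ≠ P' := fun hc => hne' (by rw [hc])
      have hd := hdisj P hP P' hP' hPP'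
      rcases hsat Q hQ P hP with hs | ⟨_, ha₀P, hn⟩ <;>
        rcases hsat Q hQ P' hP' with hs' | ⟨_, ha₀P', hn'⟩
      · rw [hφ]; simp only [if_pos hs, if_pos hs']; exact hd
      · rw [hφ]; simp only [if_pos hs, if_neg hn']
        rw [Finset.disjoint_right]
        intro y hy hy'
        rcases Finset.mem_insert.mp hy with rfl | hy2
        · exact ha₀B (hs hy')
        · exact Finset.disjoint_left.mp hd hy' (Finset.mem_inter.mp hy2).1
      · rw [hφ]; simp only [if_neg hn, if_pos hs']
        rw [Finset.disjoint_left]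
        intro y hy hy'
        rcases Finset.mem_insert.mp hy with rfl | hy2
        · exact ha₀B (hs' hy')
        · exact Finset.disjoint_left.mp hd (Finset.mem_inter.mp hy2).1 hy'
      · exact absurd (Finset.disjoint_left.mp hd ha₀P) (by simp [ha₀P'])
    · intro y hy
      rcases Finset.mem_insert.mp hy with hya | hyB
      · obtain ⟨P₀, hP₀, hP₀B⟩ := hbig Q hQ
        rcases hsat Q hQ P₀ hP₀ with hsmall | ⟨_, ha₀P, hnsub⟩
        · -- impossible: P₀ ⊆ B would make Y ⊆ B
          exfalso
          by_cases hc : a₀ ∈ P₀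
          · exact ha₀B (hsmall hc)
          · exact ha₀B (hP₀B (Finset.mem_sdiff.mpr ⟨ha₀Y, hc⟩))
        · refine ⟨φ P₀, Finset.mem_image_of_mem _ hP₀, ?_⟩
          rw [hφ, hya]; simp only [if_neg hnsub]
          exact Finset.mem_insert_self _ _
      · obtain ⟨P, hP, hyP⟩ := hcover y (hBY hyB)
        refine ⟨φ P, Finset.mem_image_of_mem _ hP, ?_⟩
        rcases hsat Q hQ P hP with hsmall | ⟨_, _, hnsub⟩
        · rw [hφ]; simp only [if_pos hsmall]; exact hyP
        · rw [hφ]; simp only [if_neg hnsub]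
          exact Finset.mem_insert_of_mem (Finset.mem_inter.mpr ⟨hyP, hyB⟩)
  -- compatibility of images
  have hcompat' : ∀ Q ∈ 𝒮, ∀ Q' ∈ 𝒮, Q ≠ Q' →
      Compat (insert a₀ B) (Q.image φ) (Q'.image φ) := by
    intro Q hQ Q' hQ' hne'
    obtain ⟨A', hA', D, hD, hsub⟩ := hcompat Q hQ Q' hQ' hne'
    refine ⟨φ A', Finset.mem_image_of_mem _ hA', φ D, Finset.mem_image_of_mem _ hD, ?_⟩
    intro y hy
    rw [Finset.mem_sdiff] at hy
    obtain ⟨hy1, hy2⟩ := hy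
    rcases hsat Q hQ A' hA' with hsA | ⟨hYBA, ha₀A, hnA⟩
    · -- A' small → D is big
      have hφA : φ A' = A' := if_pos hsA
      have hDbig : ¬D ⊆ B := by
        intro hc
        have ha₀D : a₀ ∈ D := hsub (Finset.mem_sdiff.mpr ⟨ha₀Y, fun hh => ha₀B (hsA hh)⟩)
        exact ha₀B (hc ha₀D)
      have hφD : φ D = insert a₀ (D ∩ B) := if_neg hDbig
      rw [hφD]
      rcases Finset.mem_insert.mp hy1 with rfl | hyB
      · exact Finset.mem_insert_self _ _
      · rw [hφA] at hy2
        have hyD : y ∈ D := hsub (Finset.mem_sdiff.mpr ⟨hBY hyB, hy2⟩)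
        exact Finset.mem_insert_of_mem (Finset.mem_inter.mpr ⟨hyD, hyB⟩)
    · -- A' big
      have hφA : φ A' = insert a₀ (A' ∩ B) := if_neg hnA
      rw [hφA] at hy2
      have hya₀ : y ≠ a₀ := by
        intro rfl'
        subst rfl'
        exact hy2 (Finset.mem_insert_self _ _)
      have hyB : y ∈ B := by
        rcases Finset.mem_insert.mp hy1 with rfl | h
        · exact absurd rfl hya₀
        · exact h
      have hyA' : y ∉ A' := fun hc =>
        hy2 (Finset.mem_insert_of_mem (Finset.mem_inter.mpr ⟨hc, hyB⟩))
      have hyD : y ∈ D := hsub (Finset.mem_sdiff.mpr ⟨hBY hyB, hyA'⟩)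
      rcases hsat Q' hQ' D hD with hsD | ⟨_, _, hnD⟩
      · rw [hφ]; simp only [if_pos hsD]; exact hyD
      · rw [hφ]; simp only [if_neg hnD]
        exact Finset.mem_insert_of_mem (Finset.mem_inter.mpr ⟨hyD, hyB⟩)
  -- apply the induction hypothesis to the image family
  have hψQ : ∀ Q ∈ 𝒮, (Q.image φ).image
      (fun X => if a₀ ∈ X then (X.erase a₀) ∪ (Y \ B) else X) = Q := by
    intro Q hQ
    rw [Finset.image_image]
    calc Q.image ((fun X => if a₀ ∈ X then (X.erase a₀) ∪ (Y \ B) else X) ∘ φ)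
        = Q.image id := Finset.image_congr (fun P hP => hψ Q hQ P hP)
      _ = Q := Finset.image_id
  have himg_inj : Set.InjOn (fun Q : Finset (Finset α) => Q.image φ) (↑𝒮 : Set (Finset (Finset α))) := by
    intro Q hQ Q' hQ' heq
    have heq' : Finset.image φ Q = Finset.image φ Q' := heq
    have h1 := hψQ Q hQ
    rw [heq', hψQ Q' hQ'] at h1
    exact h1.symm
  set ℱ' := 𝒮.image (fun Q : Finset (Finset α) => Q.image φ) with hℱ'
  have hcard' : ℱ'.card = 𝒮.card := Finset.card_image_of_injOn himg_inj
  have hfinal : ℱ'.card + 2 ≤ (insert a₀ B).card := by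
    apply IH (insert a₀ B) ℱ' (by rw [hcard'])
    · intro P hP
      obtain ⟨Q, hQ, rfl⟩ := Finset.mem_image.mp hP
      exact hthree Q hQ
    · intro P hP Q hQ hne'
      obtain ⟨Q₁, hQ₁, rfl⟩ := Finset.mem_image.mp hP
      obtain ⟨Q₂, hQ₂, rfl⟩ := Finset.mem_image.mp hQ
      have : Q₁ ≠ Q₂ := fun hc => hne' (by rw [hc])
      exact hcompat' Q₁ hQ₁ Q₂ hQ₂ this
    · exact h𝒮ne.image _
  rw [hcard', Finset.card_insert_of_notMem ha₀B] at hfinal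
  omega

/-- Burton–Keane partition lemma: a family of distinct pairwise compatible
three-partitions of `Y` has at most `|Y| - 2` members. -/
lemma threePart_main : ∀ (n : ℕ) (Y : Finset α) (ℱ : Finset (Finset (Finset α))),
    ℱ.card ≤ n → (∀ P ∈ ℱ, IsThreePart Y P) →
    (∀ P ∈ ℱ, ∀ Q ∈ ℱ, P ≠ Q → Compat Y P Q) → ℱ.Nonempty →
      ℱ.card + 2 ≤ Y.card := by
  intro n
  induction n with
  | zero =>
    intro Y ℱ hle _ _ hne
    have := Finset.card_pos.mpr hne
    omega
  | succ n IH =>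
    intro Y ℱ hle h3 hcompat hne
    have h𝒜ne : (ℱ.biUnion id).Nonempty := by
      obtain ⟨P, hP⟩ := hne
      obtain ⟨A, hA⟩ := Finset.card_pos.mp (by rw [(h3 P hP).1]; norm_num)
      exact ⟨A, Finset.mem_biUnion.mpr ⟨P, hP, hA⟩⟩
    obtain ⟨A, hA𝒜, hAmin⟩ : ∃ A ∈ ℱ.biUnion id, ∀ x ∈ ℱ.biUnion id, ¬x < A :=
      let ⟨A, hA⟩ := Finset.exists_minimal h𝒜ne; ⟨A, hA.prop, fun _ hx => hA.not_lt hx⟩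
    obtain ⟨P₀, hP₀ℱ, hAP₀⟩ := Finset.mem_biUnion.mp hA𝒜
    simp only [id] at hAP₀
    obtain ⟨hc3, hne3, hsubY, hdisj, hcover⟩ := h3 P₀ hP₀ℱ
    have hcer : (P₀.erase A).card = 2 := by rw [Finset.card_erase_of_mem hAP₀, hc3]
    obtain ⟨B, C, hBC, hBCeq⟩ := Finset.card_eq_two.mp hcer
    have hBer : B ∈ P₀.erase A := by rw [hBCeq]; simp
    have hCer : C ∈ P₀.erase A := by rw [hBCeq]; simp
    have hBP₀ : B ∈ P₀ := Finset.mem_of_mem_erase hBer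
    have hCP₀ : C ∈ P₀ := Finset.mem_of_mem_erase hCer
    have hBA : B ≠ A := Finset.ne_of_mem_erase hBer
    have hCA : C ≠ A := Finset.ne_of_mem_erase hCer
    have hparts : ∀ X ∈ P₀, X = A ∨ X = B ∨ X = C := by
      intro X hX
      by_cases hXA : X = A
      · exact Or.inl hXA
      · have hXe : X ∈ P₀.erase A := Finset.mem_erase.mpr ⟨hXA, hX⟩
        rw [hBCeq] at hXe
        rcases Finset.mem_insert.mp hXe with h | h
        · exact Or.inr (Or.inl h)
        · exact Or.inr (Or.inr (Finset.mem_singleton.mp h))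
    have hminimal : ∀ Q ∈ ℱ, ∀ R ∈ Q, R ⊆ A → R = A := by
      intro Q hQ R hR hsub
      by_contra hne'
      exact hAmin R (Finset.mem_biUnion.mpr ⟨Q, hQ, hR⟩) (lt_of_le_of_ne hsub hne')
    have hbranch : ∀ Q ∈ ℱ, Q ≠ P₀ →
        (∃ P ∈ Q, Y \ P ⊆ B) ∨ (∃ P ∈ Q, Y \ P ⊆ C) := by
      intro Q hQ hQP₀
      obtain ⟨A', hA', D, hD, hsub⟩ := hcompat Q hQ P₀ hP₀ℱ hQP₀
      rcases hparts D hD with rfl | rfl | rfl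
      · -- D = A: impossible by minimality of A
        exfalso
        obtain ⟨hcQ, hneQ, hsubYQ, hdisjQ, _⟩ := h3 Q hQ
        have hcerQ : (Q.erase A').card = 2 := by
          rw [Finset.card_erase_of_mem hA', hcQ]
        obtain ⟨R₁, R₂, hR12, hReq⟩ := Finset.card_eq_two.mp hcerQ
        have hR₁e : R₁ ∈ Q.erase A' := by rw [hReq]; simp
        have hR₂e : R₂ ∈ Q.erase A' := by rw [hReq]; simp
        have hsubA : ∀ R ∈ Q.erase A', R ⊆ D := by
          intro R hRe y hy
          have hRQ := Finset.mem_of_mem_erase hRe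
          have hRA' := Finset.ne_of_mem_erase hRe
          have hyY : y ∈ Y := hsubYQ R hRQ hy
          have hyA' : y ∉ A' :=
            Finset.disjoint_left.mp (hdisjQ R hRQ A' hA' hRA') hy
          exact hsub (Finset.mem_sdiff.mpr ⟨hyY, hyA'⟩)
        have hR₁A : R₁ = D :=
          hminimal Q hQ R₁ (Finset.mem_of_mem_erase hR₁e) (hsubA R₁ hR₁e)
        have hR₂A : R₂ = D :=
          hminimal Q hQ R₂ (Finset.mem_of_mem_erase hR₂e) (hsubA R₂ hR₂e)
        exact hR12 (hR₁A.trans hR₂A.symm)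
      · exact Or.inl ⟨A', hA', hsub⟩
      · exact Or.inr ⟨A', hA', hsub⟩
    classical
    set 𝒮B := (ℱ.erase P₀).filter (fun Q => ∃ P ∈ Q, Y \ P ⊆ B) with h𝒮B
    set 𝒮C := (ℱ.erase P₀).filter (fun Q => ∃ P ∈ Q, Y \ P ⊆ C) with h𝒮C
    have hsplit : ℱ.erase P₀ ⊆ 𝒮B ∪ 𝒮C := by
      intro Q hQ
      have hQℱ := Finset.mem_of_mem_erase hQ
      have hQne := Finset.ne_of_mem_erase hQ
      rcases hbranch Q hQℱ hQne with h | h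
      · exact Finset.mem_union_left _ (Finset.mem_filter.mpr ⟨hQ, h⟩)
      · exact Finset.mem_union_right _ (Finset.mem_filter.mpr ⟨hQ, h⟩)
    obtain ⟨a₀, ha₀A⟩ := hne3 A hAP₀
    have ha₀Y : a₀ ∈ Y := hsubY A hAP₀ ha₀A
    have hcard_erase : (ℱ.erase P₀).card = ℱ.card - 1 :=
      Finset.card_erase_of_mem hP₀ℱ
    have hℱpos : 1 ≤ ℱ.card := Finset.card_pos.mpr hne
    have hbound : ∀ (X : Finset α), X ∈ P₀ → X ≠ A →
        ∀ 𝒮 : Finset (Finset (Finset α)),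
        𝒮 = (ℱ.erase P₀).filter (fun Q => ∃ P ∈ Q, Y \ P ⊆ X) →
        𝒮.card + 1 ≤ X.card := by
      intro X hXP₀ hXA 𝒮 h𝒮
      have h𝒮sub : 𝒮 ⊆ ℱ.erase P₀ := by rw [h𝒮]; exact Finset.filter_subset _ _
      have h𝒮ℱ : 𝒮 ⊆ ℱ := h𝒮sub.trans (Finset.erase_subset _ _)
      refine branch_bound ha₀Y ?_ (hsubY X hXP₀) (hne3 X hXP₀) 𝒮
        (fun Q hQ => h3 Q (h𝒮ℱ hQ)) ?_
        (fun P hP Q hQ hne' => hcompat P (h𝒮ℱ hP) Q (h𝒮ℱ hQ) hne') ?_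
      · exact fun hc =>
          Finset.disjoint_left.mp (hdisj A hAP₀ X hXP₀ (Ne.symm hXA)) ha₀A hc
      · intro Q hQ
        rw [h𝒮] at hQ
        exact (Finset.mem_filter.mp hQ).2
      · intro Y' ℱ' hle' h3' hcompat' hne'
        apply IH Y' ℱ' _ h3' hcompat' hne'
        calc ℱ'.card ≤ 𝒮.card := hle'
          _ ≤ (ℱ.erase P₀).card := Finset.card_le_card h𝒮sub
          _ ≤ n := by omega
    have hB := hbound B hBP₀ hBA 𝒮B h𝒮B
    have hC := hbound C hCP₀ hCA 𝒮C h𝒮C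
    have hYeq : Y = A ∪ B ∪ C := by
      apply Finset.Subset.antisymm
      · intro y hy
        obtain ⟨X, hX, hyX⟩ := hcover y hy
        rcases hparts X hX with rfl | rfl | rfl
        · exact Finset.mem_union_left _ (Finset.mem_union_left _ hyX)
        · exact Finset.mem_union_left _ (Finset.mem_union_right _ hyX)
        · exact Finset.mem_union_right _ hyX
      · intro y hy
        rcases Finset.mem_union.mp hy with h | h
        · rcases Finset.mem_union.mp h with h' | h'
          · exact hsubY A hAP₀ h'
          · exact hsubY B hBP₀ h'
        · exact hsubY C hCP₀ h
    have hdAB : Disjoint A B := hdisj A hAP₀ B hBP₀ (Ne.symm hBA)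
    have hdAC : Disjoint A C := hdisj A hAP₀ C hCP₀ (Ne.symm hCA)
    have hdBC : Disjoint B C := hdisj B hBP₀ C hCP₀ hBC
    have hYcard : Y.card = A.card + B.card + C.card := by
      rw [hYeq, Finset.card_union_of_disjoint, Finset.card_union_of_disjoint hdAB]
      rw [Finset.disjoint_union_left]
      exact ⟨hdAC, hdBC⟩
    have hApos : 1 ≤ A.card := Finset.card_pos.mpr (hne3 A hAP₀)
    have hcardsplit : (ℱ.erase P₀).card ≤ 𝒮B.card + 𝒮C.card :=
      (Finset.card_le_card hsplit).trans (Finset.card_union_le _ _)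
    omega

/-- The final linear bound. -/
lemma threePart_card_le (Y : Finset α) (ℱ : Finset (Finset (Finset α)))
    (h3 : ∀ P ∈ ℱ, IsThreePart Y P)
    (hcompat : ∀ P ∈ ℱ, ∀ Q ∈ ℱ, P ≠ Q → Compat Y P Q) : ℱ.card ≤ Y.card := by
  rcases Finset.eq_empty_or_nonempty ℱ with rfl | hne
  · simp
  · have := threePart_main ℱ.card Y ℱ le_rfl h3 hcompat hne
    omega

end Partition
section Core

open Relation

lemma core_in_one_comp {S G F : Set BEdge} (hGS : G ⊆ S) (hGconn : FConn G)
    (hGF : ∀ y ∈ G, y ∉ F) {g₀ : BEdge} (hg₀ : g₀ ∈ G) :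
    ∀ g ∈ G, g ∈ compIn (S \ F) g₀ := by
  intro g hg
  have hmono : ∀ u v : BEdge, erel G u v → erel (S \ F) u v := by
    rintro u v ⟨hu, hv, hs⟩
    exact ⟨⟨hGS hu, hGF u hu⟩, ⟨hGS hv, hGF v hv⟩, hs⟩
  exact ReflTransGen.mono hmono _ _ (hGconn g₀ hg₀ g hg)

/-- If `x` lies in the cluster of the connected core `F` but outside the component
(after removing `F`) containing the other core `F'`, then after removing `F'`
instead, `x` lies in the component of `F`. -/
lemma cross_core {S : Set BEdge} {F F' : Finset BEdge} {f₀ g₀ x : BEdge}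
    (hFS : (F : Set BEdge) ⊆ S) (hFconn : FConn (F : Set BEdge))
    (hF'S : (F' : Set BEdge) ⊆ S) (hF'conn : FConn (F' : Set BEdge))
    (hFF' : ∀ y ∈ (F' : Set BEdge), y ∉ (F : Set BEdge))
    (hF'F : ∀ y ∈ (F : Set BEdge), y ∉ (F' : Set BEdge))
    (hf₀ : f₀ ∈ (F : Set BEdge)) (hg₀ : g₀ ∈ (F' : Set BEdge))
    (hxS : x ∈ S) (hxF : x ∉ (F : Set BEdge))
    (hpath : ReflTransGen (erel S) x f₀)
    (hxK : x ∉ compIn (S \ (F : Set BEdge)) g₀) :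
    x ∈ compIn (S \ (F' : Set BEdge)) f₀ := by
  have hK'F' : ∀ y ∈ compIn (S \ (F : Set BEdge)) x, y ∉ (F' : Set BEdge) := by
    intro y hy hyF'
    have hyK : y ∈ compIn (S \ (F : Set BEdge)) g₀ :=
      core_in_one_comp hF'S hF'conn hFF' hg₀ y hyF'
    exact hxK (compIn_trans hyK (compIn_comm hy))
  obtain ⟨y, z, hyK, hzF, hzS, hyz⟩ := first_hit hpath hxF hf₀
  have h1 : z ∈ compIn (S \ (F' : Set BEdge)) f₀ :=
    core_in_one_comp hFS hFconn hF'F hf₀ z hzF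
  have hyS : y ∈ S := (mem_S_of_mem_compIn (show x ∈ S \ (F : Set BEdge) from ⟨hxS, hxF⟩) hyK).1
  have hyF' : y ∉ (F' : Set BEdge) := hK'F' y hyK
  have hzF' : z ∉ (F' : Set BEdge) := hF'F z hzF
  have h2 : y ∈ compIn (S \ (F' : Set BEdge)) f₀ :=
    h1.tail ⟨⟨hzS, hzF'⟩, ⟨hyS, hyF'⟩, shareEnd_symm_s12 hyz⟩
  have h3 : x ∈ compIn ((S \ (F : Set BEdge)) \ (F' : Set BEdge)) y :=
    compIn_lift_avoid (fun w hw => hK'F' w (compIn_trans hyK hw)) (compIn_comm hyK)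
  have h4 : x ∈ compIn (S \ (F' : Set BEdge)) y := by
    refine compIn_mono ?_ y h3
    intro w hw
    exact ⟨hw.1.1, hw.2⟩
  exact compIn_trans h2 h4

/-- A three-partition is never "self-compatible". -/
lemma no_self_compat {α : Type*} [DecidableEq α] {Y : Finset α}
    {Pp : Finset (Finset α)} (h3 : IsThreePart Y Pp) {P Q : Finset α}
    (hP : P ∈ Pp) (hQ : Q ∈ Pp) (hsub : Y \ P ⊆ Q) : False := by
  obtain ⟨hcard, hne, hsubY, hdisj, _⟩ := h3
  have hex : ∃ R ∈ Pp, R ≠ P ∧ R ≠ Q := by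
    rcases eq_or_ne P Q with rfl | hne'
    · obtain ⟨R, hR, hRP⟩ := Finset.exists_mem_ne (show 1 < Pp.card by omega) P
      exact ⟨R, hR, hRP, hRP⟩
    · have h2 : 1 < (Pp.erase P).card := by
        rw [Finset.card_erase_of_mem hP, hcard]
        norm_num
      obtain ⟨R, hR, hRQ⟩ := Finset.exists_mem_ne h2 Q
      exact ⟨R, Finset.mem_of_mem_erase hR, Finset.ne_of_mem_erase hR, hRQ⟩
  obtain ⟨R, hRPp, hRPQ⟩ := hex
  obtain ⟨r, hr⟩ := hne R hRPp
  have hrY : r ∈ Y := hsubY R hRPp hr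
  have hrP : r ∉ P := Finset.disjoint_left.mp (hdisj R hRPp P hP hRPQ.1) hr
  have hrQ : r ∈ Q := hsub (Finset.mem_sdiff.mpr ⟨hrY, hrP⟩)
  exact Finset.disjoint_left.mp (hdisj R hRPp Q hQ hRPQ.2) hr hrQ

end Core
section Counting

open Relation

variable {ι : Type*} [DecidableEq ι]

lemma finset_ne_of_disjoint {β : Type*} {s t : Finset β} (hs : s.Nonempty)
    (h : Disjoint s t) : s ≠ t := by
  intro heq
  obtain ⟨x, hx⟩ := hs
  exact Finset.disjoint_left.mp h hx (heq ▸ hx)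

/-- The Burton–Keane counting bound: pairwise disjoint trifurcation structures
inside the box of radius `M` are at most as numerous as the edges of `S` in
the annulus `M < ‖·‖ ≤ M + 2`. -/
lemma counting (S : Set BEdge) (M : ℤ) (Q : Finset ι)
    (Fc : ι → Finset BEdge) (ea eb ec : ι → BEdge)
    (htrif : ∀ q ∈ Q, Trif S (Fc q) (ea q) (eb q) (ec q))
    (hdisj : ∀ q ∈ Q, ∀ q' ∈ Q, q ≠ q' →
      ∀ y ∈ (Fc q : Set BEdge), y ∉ (Fc q' : Set BEdge))
    (hsm : ∀ q ∈ Q, (∀ f ∈ (Fc q : Set BEdge), small M f) ∧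
      small M (ea q) ∧ small M (eb q) ∧ small M (ec q)) :
    Q.card ≤ ((small_finite (M + 2)).toFinset.filter
      (fun e => e ∈ S ∧ ¬ small M e)).card := by
  classical
  set Yfin : Finset BEdge := (small_finite (M + 2)).toFinset.filter
    (fun e => e ∈ S ∧ ¬ small M e) with hYfin
  have hYmem : ∀ e, e ∈ Yfin ↔ (e ∈ S ∧ ¬ small M e ∧ small (M + 2) e) := by
    intro e
    simp only [hYfin, Finset.mem_filter, Set.Finite.mem_toFinset, Set.mem_setOf_eq]
    tauto
  set cl : ι → Set BEdge := fun q => compIn S (ea q) with hcl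
  set Pa : ι → Finset BEdge :=
    fun q => Yfin.filter (fun y => y ∈ compIn (S \ (Fc q : Set BEdge)) (ea q)) with hPa
  set Pb : ι → Finset BEdge :=
    fun q => Yfin.filter (fun y => y ∈ compIn (S \ (Fc q : Set BEdge)) (eb q)) with hPb
  set YC : ι → Finset BEdge := fun q => Yfin.filter (fun y => y ∈ cl q) with hYC
  set Pc : ι → Finset BEdge := fun q => (YC q) \ (Pa q ∪ Pb q) with hPc
  set Pt : ι → Finset (Finset BEdge) := fun q => {Pa q, Pb q, Pc q} with hPt
  -- basic facts for a fixed q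
  have hPaYC : ∀ q ∈ Q, Pa q ⊆ YC q := by
    intro q hq y hy
    rw [hPa, Finset.mem_filter] at hy
    rw [hYC, Finset.mem_filter]
    exact ⟨hy.1, compIn_mono Set.diff_subset _ hy.2⟩
  have hPbYC : ∀ q ∈ Q, Pb q ⊆ YC q := by
    intro q hq y hy
    obtain ⟨_, _, _, _, _, _, _, _, _, _, hbC, _⟩ := htrif q hq
    rw [hPb, Finset.mem_filter] at hy
    rw [hYC, Finset.mem_filter]
    exact ⟨hy.1, compIn_trans hbC (compIn_mono Set.diff_subset _ hy.2)⟩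
  have hPcYC : ∀ q ∈ Q, Pc q ⊆ YC q := by
    intro q hq
    rw [hPc]
    exact Finset.sdiff_subset
  -- nonemptiness of the parts
  have hmkY : ∀ (q : ι) (w e' : BEdge), w ∈ compIn (S \ (Fc q : Set BEdge)) e' →
      w ∈ S \ (Fc q : Set BEdge) → ¬ small M w → small (M + 2) w → w ∈ Yfin := by
    intro q w e' _ hwS hw1 hw2
    exact (hYmem w).mpr ⟨hwS.1, hw1, hw2⟩
  have hPaNe : ∀ q ∈ Q, (Pa q).Nonempty := by
    intro q hq
    obtain ⟨_, _, _, _, _, _, _, _, _, _, _, _, hiA, _⟩ := htrif q hq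
    obtain ⟨w, hw, hwS, hw1, hw2⟩ := annulus_elt_of_infinite hiA (hsm q hq).2.1
    refine ⟨w, ?_⟩
    rw [hPa, Finset.mem_filter]
    exact ⟨hmkY q w _ hw hwS hw1 hw2, hw⟩
  have hPbNe : ∀ q ∈ Q, (Pb q).Nonempty := by
    intro q hq
    obtain ⟨_, _, _, _, _, _, _, _, _, _, _, _, _, hiB, _⟩ := htrif q hq
    obtain ⟨w, hw, hwS, hw1, hw2⟩ := annulus_elt_of_infinite hiB (hsm q hq).2.2.1
    refine ⟨w, ?_⟩
    rw [hPb, Finset.mem_filter]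
    exact ⟨hmkY q w _ hw hwS hw1 hw2, hw⟩
  -- distinctness of components
  have hcomp_ne : ∀ (T : Set BEdge) (u v y : BEdge), v ∉ compIn T u →
      y ∈ compIn T u → y ∈ compIn T v → False := by
    intro T u v y huv hyu hyv
    exact huv (by rw [← compIn_eq_of_mem hyu, compIn_eq_of_mem hyv]
                  exact ReflTransGen.refl)
  have hPcNe : ∀ q ∈ Q, (Pc q).Nonempty := by
    intro q hq
    obtain ⟨_, _, _, _, _, _, _, _, _, _, _, hcC, _, _, hiC, _, hac, hbc⟩ := htrif q hq
    obtain ⟨w, hw, hwS, hw1, hw2⟩ := annulus_elt_of_infinite hiC (hsm q hq).2.2.2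
    have hwY : w ∈ Yfin := hmkY q w _ hw hwS hw1 hw2
    refine ⟨w, ?_⟩
    rw [hPc, Finset.mem_sdiff, Finset.mem_union]
    constructor
    · rw [hYC, Finset.mem_filter]
      exact ⟨hwY, compIn_trans hcC (compIn_mono Set.diff_subset _ hw)⟩
    · rintro (hwa | hwb)
      · rw [hPa, Finset.mem_filter] at hwa
        exact hcomp_ne _ _ _ _ hac hwa.2 hw
      · rw [hPb, Finset.mem_filter] at hwb
        exact hcomp_ne _ _ _ _ hbc hwb.2 hw
  have hdAB : ∀ q ∈ Q, Disjoint (Pa q) (Pb q) := by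
    intro q hq
    obtain ⟨_, _, _, _, _, _, _, _, _, _, _, _, _, _, _, hab, _⟩ := htrif q hq
    rw [Finset.disjoint_left]
    intro y hya hyb
    rw [hPa, Finset.mem_filter] at hya
    rw [hPb, Finset.mem_filter] at hyb
    exact hcomp_ne _ _ _ _ hab hya.2 hyb.2
  have hdAC : ∀ q ∈ Q, Disjoint (Pa q) (Pc q) := by
    intro q hq
    rw [hPc]
    exact (Finset.disjoint_sdiff).mono_left Finset.subset_union_left
  have hdBC : ∀ q ∈ Q, Disjoint (Pb q) (Pc q) := by
    intro q hq
    rw [hPc]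
    exact (Finset.disjoint_sdiff).mono_left Finset.subset_union_right
  have hthree : ∀ q ∈ Q, IsThreePart (YC q) (Pt q) := by
    intro q hq
    have hab : Pa q ≠ Pb q := finset_ne_of_disjoint (hPaNe q hq) (hdAB q hq)
    have hac : Pa q ≠ Pc q := finset_ne_of_disjoint (hPaNe q hq) (hdAC q hq)
    have hbc : Pb q ≠ Pc q := finset_ne_of_disjoint (hPbNe q hq) (hdBC q hq)
    refine ⟨?_, ?_, ?_, ?_, ?_⟩
    · rw [hPt]
      rw [Finset.card_insert_of_notMem (by simp [hab, hac]),
        Finset.card_insert_of_notMem (by simp [hbc]), Finset.card_singleton]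
    · intro A hA
      rw [hPt] at hA
      rcases Finset.mem_insert.mp hA with rfl | hA'
      · exact hPaNe q hq
      · rcases Finset.mem_insert.mp hA' with rfl | hA''
        · exact hPbNe q hq
        · rw [Finset.mem_singleton.mp hA'']
          exact hPcNe q hq
    · intro A hA
      rw [hPt] at hA
      rcases Finset.mem_insert.mp hA with rfl | hA'
      · exact hPaYC q hq
      · rcases Finset.mem_insert.mp hA' with rfl | hA''
        · exact hPbYC q hq
        · rw [Finset.mem_singleton.mp hA'']
          exact hPcYC q hq
    · intro A hA B hB hne'
      rw [hPt] at hA hB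
      simp only [Finset.mem_insert, Finset.mem_singleton] at hA hB
      rcases hA with rfl | rfl | rfl <;> rcases hB with rfl | rfl | rfl
      · exact absurd rfl hne'
      · exact hdAB q hq
      · exact hdAC q hq
      · exact (hdAB q hq).symm
      · exact absurd rfl hne'
      · exact hdBC q hq
      · exact (hdAC q hq).symm
      · exact (hdBC q hq).symm
      · exact absurd rfl hne'
    · intro y hy
      by_cases hya : y ∈ Pa q
      · exact ⟨Pa q, by rw [hPt]; simp, hya⟩
      · by_cases hyb : y ∈ Pb q
        · exact ⟨Pb q, by rw [hPt]; simp, hyb⟩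
        · refine ⟨Pc q, by rw [hPt]; simp, ?_⟩
          rw [hPc, Finset.mem_sdiff, Finset.mem_union]
          exact ⟨hy, by tauto⟩
  -- the compatibility/distinctness core
  have hkey : ∀ q ∈ Q, ∀ q' ∈ Q, q ≠ q' → cl q = cl q' →
      ∃ P ∈ Pt q, ∃ P' ∈ Pt q', YC q \ P ⊆ P' := by
    intro q hq q' hq' hne' hclq
    obtain ⟨hFne, hFS, hFconn, hFC, haS, _, _, _, _, _, _, _, _, _, _, hab, hac, hbc⟩ :=
      htrif q hq
    obtain ⟨hFne', hFS', hFconn', hFC', _, _, _, _, _, _, _, _, _, _, _, hab', hac', hbc'⟩ :=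
      htrif q' hq'
    obtain ⟨f₀, hf₀⟩ := hFne
    obtain ⟨g₀, hg₀⟩ := hFne'
    set Ps : Finset BEdge :=
      if g₀ ∈ compIn (S \ (Fc q : Set BEdge)) (ea q) then Pa q
      else if g₀ ∈ compIn (S \ (Fc q : Set BEdge)) (eb q) then Pb q else Pc q with hPs
    set Ps' : Finset BEdge :=
      if f₀ ∈ compIn (S \ (Fc q' : Set BEdge)) (ea q') then Pa q'
      else if f₀ ∈ compIn (S \ (Fc q' : Set BEdge)) (eb q') then Pb q' else Pc q' with hPs'
    have hPsmem : Ps ∈ Pt q := by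
      rw [hPs, hPt]
      split_ifs <;> simp
    have hPs'mem : Ps' ∈ Pt q' := by
      rw [hPs', hPt]
      split_ifs <;> simp
    refine ⟨Ps, hPsmem, Ps', hPs'mem, ?_⟩
    intro y hy
    rw [Finset.mem_sdiff] at hy
    obtain ⟨hyYC, hyPs⟩ := hy
    have hyYfin : y ∈ Yfin := by
      rw [hYC, Finset.mem_filter] at hyYC; exact hyYC.1
    have hyclq : y ∈ compIn S (ea q) := by
      rw [hYC, Finset.mem_filter] at hyYC; exact hyYC.2
    have hyS : y ∈ S := ((hYmem y).mp hyYfin).1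
    have hyfar : ¬ small M y := ((hYmem y).mp hyYfin).2.1
    -- step 1 : y is not in the component of g₀ in S \ Fc q
    have hstep1 : y ∉ compIn (S \ (Fc q : Set BEdge)) g₀ := by
      intro hyg₀
      rw [hPs] at hyPs
      by_cases h1 : g₀ ∈ compIn (S \ (Fc q : Set BEdge)) (ea q)
      · rw [if_pos h1] at hyPs
        apply hyPs
        rw [hPa, Finset.mem_filter]
        refine ⟨hyYfin, ?_⟩
        rw [← compIn_eq_of_mem h1]
        exact hyg₀
      · by_cases h2 : g₀ ∈ compIn (S \ (Fc q : Set BEdge)) (eb q)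
        · rw [if_neg h1, if_pos h2] at hyPs
          apply hyPs
          rw [hPb, Finset.mem_filter]
          refine ⟨hyYfin, ?_⟩
          rw [← compIn_eq_of_mem h2]
          exact hyg₀
        · rw [if_neg h1, if_neg h2] at hyPs
          -- y ∈ Pa ∪ Pb
          have hyab : y ∈ Pa q ∨ y ∈ Pb q := by
            by_contra hcon
            push_neg at hcon
            apply hyPs
            rw [hPc, Finset.mem_sdiff, Finset.mem_union]
            exact ⟨hyYC, by tauto⟩
          rcases hyab with hya | hyb
          · rw [hPa, Finset.mem_filter] at hya
            apply h1
            rw [← compIn_eq_of_mem hya.2, compIn_eq_of_mem hyg₀]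
            exact ReflTransGen.refl
          · rw [hPb, Finset.mem_filter] at hyb
            apply h2
            rw [← compIn_eq_of_mem hyb.2, compIn_eq_of_mem hyg₀]
            exact ReflTransGen.refl
    -- step 2 : cross the cores
    have hyFq : y ∉ (Fc q : Set BEdge) := fun hc => hyfar ((hsm q hq).1 y hc)
    have hpath : ReflTransGen (erel S) y f₀ :=
      ReflTransGen.trans (compIn_comm hyclq) (hFC hf₀)
    have hyK' : y ∈ compIn (S \ (Fc q' : Set BEdge)) f₀ :=
      cross_core hFS hFconn hFS' hFconn' (hdisj q' hq' q hq (Ne.symm hne'))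
        (hdisj q hq q' hq' hne') hf₀ hg₀ hyS hyFq hpath hstep1
    -- step 3 : conclude membership in Ps'
    rw [hPs']
    by_cases h1 : f₀ ∈ compIn (S \ (Fc q' : Set BEdge)) (ea q')
    · rw [if_pos h1, hPa, Finset.mem_filter]
      refine ⟨hyYfin, ?_⟩
      rw [← compIn_eq_of_mem h1]
      exact hyK'
    · by_cases h2 : f₀ ∈ compIn (S \ (Fc q' : Set BEdge)) (eb q')
      · rw [if_neg h1, if_pos h2, hPb, Finset.mem_filter]
        refine ⟨hyYfin, ?_⟩
        rw [← compIn_eq_of_mem h2]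
        exact hyK'
      · rw [if_neg h1, if_neg h2, hPc, Finset.mem_sdiff, Finset.mem_union]
        constructor
        · rw [hYC, Finset.mem_filter]
          refine ⟨hyYfin, ?_⟩
          rw [← hclq]
          exact hyclq
        · push_neg
          constructor
          · intro hya
            rw [hPa, Finset.mem_filter] at hya
            exact h1 (by rw [← compIn_eq_of_mem hya.2, compIn_eq_of_mem hyK']
                         exact ReflTransGen.refl)
          · intro hyb
            rw [hPb, Finset.mem_filter] at hyb
            exact h2 (by rw [← compIn_eq_of_mem hyb.2, compIn_eq_of_mem hyK']
                         exact ReflTransGen.refl)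
  have hdistinct : ∀ q ∈ Q, ∀ q' ∈ Q, q ≠ q' → cl q = cl q' → Pt q ≠ Pt q' := by
    intro q hq q' hq' hne' hclq heq
    obtain ⟨P, hP, P', hP', hsub⟩ := hkey q hq q' hq' hne' hclq
    rw [← heq] at hP'
    exact no_self_compat (hthree q hq) hP hP' hsub
  -- fiberwise count
  have hYCeq : ∀ q ∈ Q, ∀ C, cl q = C → YC q = Yfin.filter (fun y => y ∈ C) := by
    intro q hq C hC
    simp only [hYC]
    rw [hC]
  have hfiber : ∀ C ∈ Q.image cl,
      (Q.filter (fun q => cl q = C)).card ≤ (Yfin.filter (fun y => y ∈ C)).card := by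
    intro C hC
    set QC := Q.filter (fun q => cl q = C) with hQC
    have hQCQ : ∀ q ∈ QC, q ∈ Q := fun q hq => (Finset.mem_filter.mp hq).1
    have hQCcl : ∀ q ∈ QC, cl q = C := fun q hq => (Finset.mem_filter.mp hq).2
    have hinj : Set.InjOn Pt (↑QC : Set ι) := by
      intro q hq q' hq' heq
      by_contra hne'
      exact hdistinct q (hQCQ q hq) q' (hQCQ q' hq') hne'
        ((hQCcl q hq).trans (hQCcl q' hq').symm) heq
    have hcard : QC.card = (QC.image Pt).card :=
      (Finset.card_image_of_injOn hinj).symm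
    rw [hcard]
    apply threePart_card_le
    · intro P hP
      obtain ⟨q, hq, rfl⟩ := Finset.mem_image.mp hP
      have := hthree q (hQCQ q hq)
      rwa [hYCeq q (hQCQ q hq) C (hQCcl q hq)] at this
    · intro P hP P' hP' hne'
      obtain ⟨q, hq, rfl⟩ := Finset.mem_image.mp hP
      obtain ⟨q', hq', rfl⟩ := Finset.mem_image.mp hP'
      have hqq' : q ≠ q' := fun hc => hne' (by rw [hc])
      obtain ⟨P, hPm, P', hP'm, hsub⟩ := hkey q (hQCQ q hq) q' (hQCQ q' hq') hqq'
        ((hQCcl q hq).trans (hQCcl q' hq').symm)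
      refine ⟨P, hPm, P', hP'm, ?_⟩
      rwa [hYCeq q (hQCQ q hq) C (hQCcl q hq)] at hsub
  -- sum over fibers
  have hQcard : Q.card = ∑ C ∈ Q.image cl, (Q.filter (fun q => cl q = C)).card :=
    Finset.card_eq_sum_card_fiberwise (fun q hq => Finset.mem_image_of_mem cl hq)
  rw [hQcard]
  calc ∑ C ∈ Q.image cl, (Q.filter (fun q => cl q = C)).card
      ≤ ∑ C ∈ Q.image cl, (Yfin.filter (fun y => y ∈ C)).card :=
        Finset.sum_le_sum hfiber
    _ = ((Q.image cl).biUnion (fun C => Yfin.filter (fun y => y ∈ C))).card := by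
        rw [Finset.card_biUnion]
        intro C hC C' hC' hne'
        obtain ⟨q, _, rfl⟩ := Finset.mem_image.mp hC
        obtain ⟨q', _, rfl⟩ := Finset.mem_image.mp hC'
        rw [Function.onFun, Finset.disjoint_left]
        intro y hy hy'
        rw [Finset.mem_filter] at hy hy'
        exact hne' (show compIn S (ea q) = compIn S (ea q') from
          (compIn_eq_of_mem (hy.2 : y ∈ compIn S (ea q))).symm.trans
            (compIn_eq_of_mem (hy'.2 : y ∈ compIn S (ea q'))))
    _ ≤ Yfin.card :=
        Finset.card_le_card (Finset.biUnion_subset.mpr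
          (fun C _ => Finset.filter_subset _ _))

end Counting
section Shift

open Relation

/-- Translation of contour edges. -/
def tEdge (t : ℤ × ℤ) (e : BEdge) : BEdge := ((e.1.1 + t.1, e.1.2 + t.2), e.2)

lemma tEdge_tEdge_neg (t : ℤ × ℤ) (e : BEdge) : tEdge (-t.1, -t.2) (tEdge t e) = e := by
  obtain ⟨⟨x, y⟩, d⟩ := e
  simp only [tEdge, Prod.mk.injEq]
  exact ⟨⟨by omega, by omega⟩, trivial⟩

lemma tEdge_neg_tEdge (t : ℤ × ℤ) (e : BEdge) : tEdge t (tEdge (-t.1, -t.2) e) = e := by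
  obtain ⟨⟨x, y⟩, d⟩ := e
  simp only [tEdge, Prod.mk.injEq]
  exact ⟨⟨by omega, by omega⟩, trivial⟩

lemma tEdge_inj (t : ℤ × ℤ) : Function.Injective (tEdge t) := by
  intro a b h
  have := congrArg (tEdge (-t.1, -t.2)) h
  rwa [tEdge_tEdge_neg, tEdge_tEdge_neg] at this

lemma shareEnd_tEdge (t : ℤ × ℤ) (a b : BEdge) :
    shareEnd (tEdge t a) (tEdge t b) ↔ shareEnd a b := by
  obtain ⟨⟨ax, ay⟩, da⟩ := a
  obtain ⟨⟨bx, by'⟩, db⟩ := b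
  obtain ⟨t1, t2⟩ := t
  cases da <;> cases db <;>
    simp only [shareEnd, edgeEnds, tEdge, if_true, if_false, Bool.false_eq_true,
      Prod.mk.injEq] <;>
    omega

lemma contourCfg_shift (t : ℤ × ℤ) (ht : Even (t.1 + t.2)) (ω : Config) (e : BEdge) :
    contourCfg (shift t ω) (tEdge t e) = contourCfg ω e := by
  obtain ⟨⟨x, y⟩, d⟩ := e
  have hv : ∀ a b : ℤ, shift t ω (a + t.1, b + t.2) = ω (a, b) := by
    intro a b
    show ω (a + t.1 - t.1, b + t.2 - t.2) = ω (a, b)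
    congr 1
    simp only [Prod.mk.injEq]
    exact ⟨by omega, by omega⟩
  have hb : IsBlackFace ((x + t.1, y + t.2) : ℤ × ℤ) ↔ IsBlackFace ((x, y) : ℤ × ℤ) := by
    simp only [IsBlackFace]
    obtain ⟨u, hu⟩ := ht
    rw [Int.even_iff, Int.even_iff]
    omega
  simp only [contourCfg, tEdge]
  simp only [hb]
  by_cases h : IsBlackFace ((x, y) : ℤ × ℤ)
  · rw [if_pos h, if_pos h]
    cases d
    · simp only [Bool.false_eq_true, if_false]
      rw [show x + t.1 + 1 = (x + 1) + t.1 by ring]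
      rw [hv x y, hv (x + 1) y]
    · simp only [if_true]
      rw [show y + t.2 + 1 = (y + 1) + t.2 by ring]
      rw [hv x y, hv x (y + 1)]
  · rw [if_neg h, if_neg h]

lemma mem_SOf_shift {t : ℤ × ℤ} (ht : Even (t.1 + t.2)) (ω : Config) (e : BEdge) :
    tEdge t e ∈ SOf (shift t ω) ↔ e ∈ SOf ω := by
  show contourCfg (shift t ω) (tEdge t e) = true ↔ contourCfg ω e = true
  rw [contourCfg_shift t ht ω e]

lemma shift_shift_neg (t : ℤ × ℤ) (ω : Config) :
    shift (-t.1, -t.2) (shift t ω) = ω := by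
  funext v
  simp only [shift]
  congr 1
  obtain ⟨a, b⟩ := v
  simp only [Prod.mk.injEq]
  omega

lemma compIn_tEdge {S S' : Set BEdge} {t : ℤ × ℤ}
    (hS : ∀ e, tEdge t e ∈ S' ↔ e ∈ S) (x e : BEdge) :
    x ∈ compIn S e ↔ tEdge t x ∈ compIn S' (tEdge t e) := by
  have hS' : ∀ u, tEdge (-t.1, -t.2) u ∈ S ↔ u ∈ S' := by
    intro u
    have h0 := hS (tEdge (-t.1, -t.2) u)
    rw [tEdge_neg_tEdge] at h0
    exact h0.symm
  constructor
  · intro h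
    refine ReflTransGen.lift (tEdge t) ?_ _ _ h
    rintro a b ⟨ha, hb, hs⟩
    exact ⟨(hS a).mpr ha, (hS b).mpr hb, (shareEnd_tEdge t a b).mpr hs⟩
  · intro h
    have h2 := ReflTransGen.lift (tEdge (-t.1, -t.2))
      (r := erel S') (p := erel S) ?_ _ _ h
    · rwa [Function.onFun, tEdge_tEdge_neg, tEdge_tEdge_neg] at h2
    · rintro a b ⟨ha, hb, hs⟩
      refine ⟨(hS' a).mpr ha, (hS' b).mpr hb, ?_⟩
      have := (shareEnd_tEdge (-t.1, -t.2) a b).mpr hs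
      exact this

lemma infinite_tEdge {A : Set BEdge} (t : ℤ × ℤ) (h : A.Infinite) :
    (tEdge t '' A).Infinite := h.image ((tEdge_inj t).injOn)

/-- Transport of the trifurcation structure under translations. -/
lemma trif_tEdge {S S' : Set BEdge} {t : ℤ × ℤ}
    (hS : ∀ e, tEdge t e ∈ S' ↔ e ∈ S) {F : Finset BEdge} {e₁ e₂ e₃ : BEdge}
    (h : Trif S F e₁ e₂ e₃) :
    Trif S' (F.image (tEdge t)) (tEdge t e₁) (tEdge t e₂) (tEdge t e₃) := by
  classical
  obtain ⟨hFne, hFS, hFconn, hFC, h1S, h2S, h3S, h1F, h2F, h3F, h2C, h3C,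
    hiA, hiB, hiC, hab, hac, hbc⟩ := h
  have hcoe : ((F.image (tEdge t) : Finset BEdge) : Set BEdge)
      = tEdge t '' (F : Set BEdge) := Finset.coe_image
  have hmemim : ∀ x : BEdge, x ∈ (F.image (tEdge t) : Finset BEdge) ↔
      ∃ f ∈ F, tEdge t f = x := by
    intro x; simp [Finset.mem_image]
  have hSdiff : ∀ e, tEdge t e ∈ S' \ ((F.image (tEdge t) : Finset BEdge) : Set BEdge)
      ↔ e ∈ S \ (F : Set BEdge) := by
    intro e
    constructor
    · rintro ⟨h1, h2⟩
      refine ⟨(hS e).mp h1, fun hc => h2 ?_⟩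
      rw [hcoe]
      exact Set.mem_image_of_mem _ hc
    · rintro ⟨h1, h2⟩
      refine ⟨(hS e).mpr h1, fun hc => ?_⟩
      rw [hcoe] at hc
      obtain ⟨f, hf, hfe⟩ := hc
      exact h2 (tEdge_inj t hfe ▸ hf)
  refine ⟨hFne.image _, ?_, ?_, ?_, (hS e₁).mpr h1S, (hS e₂).mpr h2S, (hS e₃).mpr h3S,
    ?_, ?_, ?_, ?_, ?_, ?_, ?_, ?_, ?_, ?_, ?_⟩
  · rw [hcoe]
    rintro x ⟨f, hf, rfl⟩
    exact (hS f).mpr (hFS hf)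
  · rw [hcoe]
    rintro a ⟨fa, hfa, rfl⟩ b ⟨fb, hfb, rfl⟩
    refine ReflTransGen.lift (tEdge t) ?_ _ _ (hFconn fa hfa fb hfb)
    rintro u v ⟨hu, hv, hs⟩
    exact ⟨Set.mem_image_of_mem _ hu, Set.mem_image_of_mem _ hv,
      (shareEnd_tEdge t u v).mpr hs⟩
  · rw [hcoe]
    rintro x ⟨f, hf, rfl⟩
    exact (compIn_tEdge hS f e₁).mp (hFC hf)
  · intro hc
    rw [hcoe] at hc
    obtain ⟨f, hf, hfe⟩ := hc
    exact h1F (tEdge_inj t hfe ▸ hf)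
  · intro hc
    rw [hcoe] at hc
    obtain ⟨f, hf, hfe⟩ := hc
    exact h2F (tEdge_inj t hfe ▸ hf)
  · intro hc
    rw [hcoe] at hc
    obtain ⟨f, hf, hfe⟩ := hc
    exact h3F (tEdge_inj t hfe ▸ hf)
  · exact (compIn_tEdge hS e₂ e₁).mp h2C
  · exact (compIn_tEdge hS e₃ e₁).mp h3C
  · apply Set.Infinite.mono ?_ (infinite_tEdge t hiA)
    rintro x ⟨w, hw, rfl⟩
    exact (compIn_tEdge hSdiff w e₁).mp hw
  · apply Set.Infinite.mono ?_ (infinite_tEdge t hiB)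
    rintro x ⟨w, hw, rfl⟩
    exact (compIn_tEdge hSdiff w e₂).mp hw
  · apply Set.Infinite.mono ?_ (infinite_tEdge t hiC)
    rintro x ⟨w, hw, rfl⟩
    exact (compIn_tEdge hSdiff w e₃).mp hw
  · intro hc
    exact hab ((compIn_tEdge hSdiff e₂ e₁).mpr hc)
  · intro hc
    exact hac ((compIn_tEdge hSdiff e₃ e₁).mpr hc)
  · intro hc
    exact hbc ((compIn_tEdge hSdiff e₃ e₂).mpr hc)

/-- The trifurcation event. -/
def TrifEv (F : Finset BEdge) (e₁ e₂ e₃ : BEdge) : Set Config :=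
  {ω | Trif (SOf ω) F e₁ e₂ e₃}

lemma trifEv_preimage (t : ℤ × ℤ) (ht : Even (t.1 + t.2)) (F : Finset BEdge)
    (e₁ e₂ e₃ : BEdge) :
    TrifEv F e₁ e₂ e₃ =
      shift t ⁻¹' TrifEv (F.image (tEdge t)) (tEdge t e₁) (tEdge t e₂) (tEdge t e₃) := by
  ext ω
  constructor
  · intro h
    exact trif_tEdge (fun e => mem_SOf_shift ht ω e) h
  · intro h
    have ht' : Even ((-t.1) + (-t.2)) := by
      obtain ⟨u, hu⟩ := ht
      exact ⟨-u, by omega⟩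
    have hS : ∀ e, tEdge (-t.1, -t.2) e ∈ SOf ω ↔ e ∈ SOf (shift t ω) := by
      intro e
      have := mem_SOf_shift (t := (-t.1, -t.2)) ht' (shift t ω) e
      rwa [shift_shift_neg] at this
    have h2 := trif_tEdge hS h
    rw [Finset.image_image] at h2
    have himid : F.image ((tEdge (-t.1, -t.2)) ∘ (tEdge t)) = F := by
      calc F.image ((tEdge (-t.1, -t.2)) ∘ (tEdge t))
          = F.image id := Finset.image_congr (fun f _ => tEdge_tEdge_neg t f)
        _ = F := Finset.image_id
    rw [himid, tEdge_tEdge_neg, tEdge_tEdge_neg, tEdge_tEdge_neg] at h2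
    exact h2

end Shift
section Meas

open Relation

lemma measurable_shift (t : ℤ × ℤ) : Measurable (shift t) :=
  measurable_pi_lambda _ (fun _ => measurable_pi_apply _)

lemma measurable_contourCfg (e : BEdge) :
    Measurable (fun ω : Config => contourCfg ω e) := by
  obtain ⟨⟨x, y⟩, d⟩ := e
  simp only [contourCfg]
  by_cases h : IsBlackFace ((x, y) : ℤ × ℤ)
  · simp only [if_pos h]
    cases d
    · simp only [Bool.false_eq_true, if_false]
      have hb : Measurable (fun ω : Config => (ω (x, y), ω (x + 1, y))) :=
        (measurable_pi_apply ((x, y) : ℤ × ℤ)).prodMk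
          (measurable_pi_apply ((x + 1, y) : ℤ × ℤ))
      exact (measurable_of_countable (fun p : Bool × Bool => p.1 != p.2)).comp hb
    · simp only [if_true]
      have hb : Measurable (fun ω : Config => (ω (x, y), ω (x, y + 1))) :=
        (measurable_pi_apply ((x, y) : ℤ × ℤ)).prodMk
          (measurable_pi_apply ((x, y + 1) : ℤ × ℤ))
      exact (measurable_of_countable (fun p : Bool × Bool => p.1 != p.2)).comp hb
  · simp only [if_neg h]
    exact measurable_const

lemma meas_memS (e : BEdge) : MeasurableSet {ω : Config | e ∈ SOf ω} :=
  (measurable_contourCfg e) (measurableSet_singleton true)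

lemma meas_memSdiff (F : Finset BEdge) (e : BEdge) :
    MeasurableSet {ω : Config | e ∈ SOf ω \ (F : Set BEdge)} := by
  by_cases hF : e ∈ F
  · have heq : {ω : Config | e ∈ SOf ω \ (F : Set BEdge)} = ∅ := by
      ext ω; simp [Set.mem_diff, hF]
    rw [heq]; exact MeasurableSet.empty
  · have heq : {ω : Config | e ∈ SOf ω \ (F : Set BEdge)} = {ω | e ∈ SOf ω} := by
      ext ω; simp [Set.mem_diff, hF]
    rw [heq]; exact meas_memS e

lemma meas_chain (F : Finset BEdge) :
    ∀ (l : List BEdge) (a : BEdge),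
      MeasurableSet {ω : Config | List.Chain (erel (SOf ω \ (F : Set BEdge))) a l} := by
  intro l
  induction l with
  | nil =>
    intro a
    have heq : {ω : Config | List.Chain (erel (SOf ω \ (F : Set BEdge))) a []} =
        Set.univ := by
      ext ω; simp [List.Chain]
    rw [heq]; exact MeasurableSet.univ
  | cons b l ih =>
    intro a
    have heq : {ω : Config | List.Chain (erel (SOf ω \ (F : Set BEdge))) a (b :: l)} =
        (({ω : Config | a ∈ SOf ω \ (F : Set BEdge)} ∩
          {ω : Config | b ∈ SOf ω \ (F : Set BEdge)}) ∩
          {_ω : Config | shareEnd a b}) ∩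
          {ω : Config | List.Chain (erel (SOf ω \ (F : Set BEdge))) b l} := by
      ext ω
      simp only [Set.mem_inter_iff, Set.mem_setOf_eq, List.Chain, List.chain_cons, erel]
      tauto
    rw [heq]
    exact (((meas_memSdiff F a).inter (meas_memSdiff F b)).inter
      (MeasurableSet.const _)).inter (ih b)

lemma meas_comp (F : Finset BEdge) (e x : BEdge) :
    MeasurableSet {ω : Config | x ∈ compIn (SOf ω \ (F : Set BEdge)) e} := by
  have heq : {ω : Config | x ∈ compIn (SOf ω \ (F : Set BEdge)) e} =
      ⋃ (l : List BEdge) (_ : (e :: l).getLast (List.cons_ne_nil _ _) = x),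
        {ω : Config | List.Chain (erel (SOf ω \ (F : Set BEdge))) e l} := by
    ext ω
    simp only [Set.mem_iUnion, Set.mem_setOf_eq]
    constructor
    · intro h
      obtain ⟨l, hl1, hl2⟩ := List.exists_isChain_cons_of_relationReflTransGen h
      exact ⟨l, hl2, hl1⟩
    · rintro ⟨l, hl2, hl1⟩
      exact List.relationReflTransGen_of_exists_isChain_cons l hl1 hl2
  rw [heq]
  exact MeasurableSet.iUnion fun l => MeasurableSet.iUnion fun _ => meas_chain F l e

lemma SOf_diff_empty (ω : Config) :
    SOf ω \ ((∅ : Finset BEdge) : Set BEdge) = SOf ω := by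
  simp

lemma meas_comp0 (e x : BEdge) :
    MeasurableSet {ω : Config | x ∈ compIn (SOf ω) e} := by
  have heq : {ω : Config | x ∈ compIn (SOf ω) e} =
      {ω : Config | x ∈ compIn (SOf ω \ ((∅ : Finset BEdge) : Set BEdge)) e} := by
    ext ω; simp only [Set.mem_setOf_eq, SOf_diff_empty]
  rw [heq]; exact meas_comp ∅ e x

lemma meas_infinite (F : Finset BEdge) (e : BEdge) :
    MeasurableSet {ω : Config | (compIn (SOf ω \ (F : Set BEdge)) e).Infinite} := by
  have heq : {ω : Config | (compIn (SOf ω \ (F : Set BEdge)) e).Infinite} =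
      ⋂ (G : Finset BEdge), ⋃ (x : BEdge) (_ : x ∉ G),
        {ω : Config | x ∈ compIn (SOf ω \ (F : Set BEdge)) e} := by
    ext ω
    simp only [Set.mem_iInter, Set.mem_iUnion, Set.mem_setOf_eq]
    constructor
    · intro h G
      obtain ⟨x, hx1, hx2⟩ := h.exists_notMem_finset G
      exact ⟨x, hx2, hx1⟩
    · intro h
      by_contra hfin
      rw [Set.not_infinite] at hfin
      obtain ⟨x, hx2, hx1⟩ := h hfin.toFinset
      exact hx2 (hfin.mem_toFinset.mpr hx1)
  rw [heq]
  exact MeasurableSet.iInter fun G => MeasurableSet.iUnion fun x =>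
    MeasurableSet.iUnion fun _ => meas_comp F e x

lemma meas_subsetS (F : Finset BEdge) :
    MeasurableSet {ω : Config | (F : Set BEdge) ⊆ SOf ω} := by
  have heq : {ω : Config | (F : Set BEdge) ⊆ SOf ω} =
      ⋂ (f : BEdge) (_ : f ∈ (F : Set BEdge)), {ω : Config | f ∈ SOf ω} := by
    ext ω; simp [Set.subset_def]
  rw [heq]
  exact MeasurableSet.iInter fun f => MeasurableSet.iInter fun _ => meas_memS f

lemma meas_subsetComp (F : Finset BEdge) (e₁ : BEdge) :
    MeasurableSet {ω : Config | (F : Set BEdge) ⊆ compIn (SOf ω) e₁} := by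
  have heq : {ω : Config | (F : Set BEdge) ⊆ compIn (SOf ω) e₁} =
      ⋂ (f : BEdge) (_ : f ∈ (F : Set BEdge)),
        {ω : Config | f ∈ compIn (SOf ω) e₁} := by
    ext ω; simp [Set.subset_def]
  rw [heq]
  exact MeasurableSet.iInter fun f => MeasurableSet.iInter fun _ => meas_comp0 e₁ f

lemma meas_not_comp (F : Finset BEdge) (e x : BEdge) :
    MeasurableSet {ω : Config | x ∉ compIn (SOf ω \ (F : Set BEdge)) e} :=
  (meas_comp F e x).compl

lemma meas_trifEv (F : Finset BEdge) (e₁ e₂ e₃ : BEdge) :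
    MeasurableSet (TrifEv F e₁ e₂ e₃) := by
  simp only [TrifEv, Trif, Set.setOf_and]
  repeat' apply MeasurableSet.inter
  all_goals first
    | exact MeasurableSet.const _
    | exact meas_subsetS F
    | exact meas_subsetComp F e₁
    | exact meas_memS _
    | exact meas_comp0 _ _
    | exact meas_infinite _ _
    | exact meas_not_comp _ _ _

end Meas
section Final

open Relation

/-- The shift vector of the translate indexed by `t`. -/
def svec (k P : ℕ) (t : ℕ × ℕ) : ℤ × ℤ :=
  (2 * (k : ℤ) * ((P : ℤ) * (t.1 : ℤ)), 2 * (k : ℤ) * ((P : ℤ) * (t.2 : ℤ)))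

lemma svec_even (k P : ℕ) (t : ℕ × ℕ) : Even ((svec k P t).1 + (svec k P t).2) := by
  refine ⟨(k : ℤ) * ((P : ℤ) * (t.1 : ℤ)) + (k : ℤ) * ((P : ℤ) * (t.2 : ℤ)), ?_⟩
  simp only [svec]
  ring

lemma sep_helper {c N : ℤ} (hc : 2 * N + 1 ≤ c) (hN : 0 ≤ N) {a a' u u' : ℤ}
    (ha : |a| ≤ N) (ha' : |a'| ≤ N) (heq : a + c * u = a' + c * u') : u = u' := by
  by_contra hne
  rw [abs_le] at ha ha'
  rcases lt_or_gt_of_ne hne with h | h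
  · have h3 : c ≤ c * (u' - u) := le_mul_of_one_le_right (by linarith) (by omega)
    have h4 : c * (u' - u) = a - a' := by linear_combination -heq
    linarith
  · have h3 : c ≤ c * (u - u') := le_mul_of_one_le_right (by linarith) (by omega)
    have h4 : c * (u - u') = a' - a := by linear_combination heq
    linarith

/-- Cardinality of the annulus. -/
lemma ann_bound (S : Set BEdge) (m : ℕ) :
    ((small_finite ((m : ℤ) + 2)).toFinset.filter
      (fun e => e ∈ S ∧ ¬ small (m : ℤ) e)).card ≤ 32 * m + 48 := by
  classical
  set M : ℤ := (m : ℤ) with hM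
  set outer := Finset.Icc ((-(M + 2), -(M + 2)) : ℤ × ℤ) ((M + 2, M + 2) : ℤ × ℤ)
    with houter
  set inner := Finset.Icc ((-M, -M) : ℤ × ℤ) ((M, M) : ℤ × ℤ) with hinner
  have hsub : (small_finite (M + 2)).toFinset.filter (fun e => e ∈ S ∧ ¬ small M e) ⊆
      (outer \ inner) ×ˢ (Finset.univ : Finset Bool) := by
    intro e he
    rw [Finset.mem_filter, Set.Finite.mem_toFinset, Set.mem_setOf_eq] at he
    obtain ⟨h2, _, h0⟩ := he
    rw [Finset.mem_product]
    refine ⟨?_, Finset.mem_univ _⟩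
    rw [Finset.mem_sdiff]
    obtain ⟨hx, hy⟩ := h2
    rw [abs_le] at hx hy
    constructor
    · rw [houter, Finset.mem_Icc]
      constructor <;> rw [Prod.le_def] <;> constructor <;> simp <;> omega
    · intro hin
      rw [hinner, Finset.mem_Icc, Prod.le_def, Prod.le_def] at hin
      apply h0
      constructor <;> rw [abs_le] <;>
        simp only [Prod.fst, Prod.snd] at hin ⊢ <;> omega
  have hcard := Finset.card_le_card hsub
  have houtercard : outer.card = (2 * m + 5) * (2 * m + 5) := by
    rw [houter, Finset.Icc_prod_def]
    simp only [Finset.card_product, Int.card_Icc]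
    have : ((M + 2 + 1 - -(M + 2)).toNat) = 2 * m + 5 := by omega
    rw [this]
  have hinnercard : inner.card = (2 * m + 1) * (2 * m + 1) := by
    rw [hinner, Finset.Icc_prod_def]
    simp only [Finset.card_product, Int.card_Icc]
    have : ((M + 1 - -M).toNat) = 2 * m + 1 := by omega
    rw [this]
  have hinsub : inner ⊆ outer := by
    rw [houter, hinner]
    apply Finset.Icc_subset_Icc <;> rw [Prod.le_def] <;> constructor <;> simp <;> omega
  calc ((small_finite (M + 2)).toFinset.filter (fun e => e ∈ S ∧ ¬ small M e)).card
      ≤ ((outer \ inner) ×ˢ (Finset.univ : Finset Bool)).card := hcard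
    _ = (outer \ inner).card * 2 := by
        rw [Finset.card_product, Finset.card_univ, Fintype.card_bool]
    _ = (outer.card - inner.card) * 2 := by rw [Finset.card_sdiff_of_subset hinsub]
    _ ≤ (16 * m + 24) * 2 := by
        rw [houtercard, hinnercard]
        have hexp : (2 * m + 5) * (2 * m + 5) =
            (2 * m + 1) * (2 * m + 1) + (16 * m + 24) := by ring
        rw [hexp, Nat.add_sub_cancel_left]
    _ = 32 * m + 48 := by ring

/-- The deterministic per-configuration counting bound. -/
lemma grid_count (k P N : ℕ) (hk : 1 ≤ k) (hP : P = 2 * N + 5) (F : Finset BEdge)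
    (e₁ e₂ e₃ : BEdge) (hsmF : ∀ f ∈ (F : Set BEdge), small (N : ℤ) f)
    (hsm1 : small (N : ℤ) e₁) (hsm2 : small (N : ℤ) e₂) (hsm3 : small (N : ℤ) e₃)
    (n : ℕ) (ω : Config) :
    (((Finset.range n) ×ˢ (Finset.range n)).filter
      (fun t => ω ∈ TrifEv (F.image (tEdge (svec k P t))) (tEdge (svec k P t) e₁)
        (tEdge (svec k P t) e₂) (tEdge (svec k P t) e₃))).card
      ≤ 64 * (k * P) * n + 32 * N + 144 := by
  classical
  set m : ℕ := 2 * k * P * n + N + 3 with hm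
  set Q := ((Finset.range n) ×ˢ (Finset.range n)).filter
      (fun t => ω ∈ TrifEv (F.image (tEdge (svec k P t))) (tEdge (svec k P t) e₁)
        (tEdge (svec k P t) e₂) (tEdge (svec k P t) e₃)) with hQ
  have hQrange : ∀ t ∈ Q, t.1 < n ∧ t.2 < n := by
    intro t ht
    rw [hQ, Finset.mem_filter, Finset.mem_product, Finset.mem_range,
      Finset.mem_range] at ht
    exact ht.1
  have hQtrif : ∀ t ∈ Q, ω ∈ TrifEv (F.image (tEdge (svec k P t)))
      (tEdge (svec k P t) e₁) (tEdge (svec k P t) e₂) (tEdge (svec k P t) e₃) := by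
    intro t ht
    rw [hQ, Finset.mem_filter] at ht
    exact ht.2
  -- smallness of translated objects
  have hsmall_t : ∀ t : ℕ × ℕ, t.1 < n → t.2 < n → ∀ f : BEdge, small (N : ℤ) f →
      small ((m : ℕ) : ℤ) (tEdge (svec k P t) f) := by
    intro t ht1 ht2 f hf
    obtain ⟨hfx, hfy⟩ := hf
    rw [abs_le] at hfx hfy
    have hc1 : (0 : ℤ) ≤ 2 * (k : ℤ) * ((P : ℤ) * (t.1 : ℤ)) := by positivity
    have hc2 : (0 : ℤ) ≤ 2 * (k : ℤ) * ((P : ℤ) * (t.2 : ℤ)) := by positivity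
    have hkP : (0 : ℤ) ≤ 2 * (k : ℤ) * (P : ℤ) := by positivity
    have hub1 : 2 * (k : ℤ) * ((P : ℤ) * (t.1 : ℤ)) ≤ (2 * k * P * n : ℕ) := by
      have h1 : (t.1 : ℤ) ≤ (n : ℤ) := by exact_mod_cast le_of_lt ht1
      have h3 := mul_le_mul_of_nonneg_left h1 hkP
      push_cast
      linarith [h3]
    have hub2 : 2 * (k : ℤ) * ((P : ℤ) * (t.2 : ℤ)) ≤ (2 * k * P * n : ℕ) := by
      have h1 : (t.2 : ℤ) ≤ (n : ℤ) := by exact_mod_cast le_of_lt ht2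
      have h3 := mul_le_mul_of_nonneg_left h1 hkP
      push_cast
      linarith [h3]
    have hmz : ((m : ℕ) : ℤ) = ((2 * k * P * n : ℕ) : ℤ) + (N : ℤ) + 3 := by
      rw [hm]; push_cast; ring
    constructor <;> simp only [tEdge, svec] <;> rw [abs_le] <;> constructor <;>
      linarith [hc1, hc2, hub1, hub2, hfx.1, hfx.2, hfy.1, hfy.2, hmz]
  -- disjointness of the translated cores
  have hdisjQ : ∀ t ∈ Q, ∀ t' ∈ Q, t ≠ t' →
      ∀ y ∈ ((F.image (tEdge (svec k P t)) : Finset BEdge) : Set BEdge),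
        y ∉ ((F.image (tEdge (svec k P t')) : Finset BEdge) : Set BEdge) := by
    intro t _ t' _ hne y hy hy'
    rw [Finset.coe_image] at hy hy'
    obtain ⟨f, hf, hfe⟩ := hy
    obtain ⟨f', hf', hfe'⟩ := hy'
    have heq : tEdge (svec k P t) f = tEdge (svec k P t') f' := by rw [hfe, hfe']
    simp only [tEdge, svec, Prod.mk.injEq] at heq
    obtain ⟨⟨hqx, hqy⟩, _⟩ := heq
    have hcN : 2 * (N : ℤ) + 1 ≤ 2 * (k : ℤ) * (P : ℤ) := by
      have : (1 : ℤ) ≤ (k : ℤ) := by exact_mod_cast hk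
      have hPc : (P : ℤ) = 2 * (N : ℤ) + 5 := by exact_mod_cast hP
      nlinarith
    have hx := (hsmF f (Finset.mem_coe.mpr hf)).1
    have hx' := (hsmF f' (Finset.mem_coe.mpr hf')).1
    have hy2 := (hsmF f (Finset.mem_coe.mpr hf)).2
    have hy2' := (hsmF f' (Finset.mem_coe.mpr hf')).2
    have h1 : (t.1 : ℤ) = (t'.1 : ℤ) := by
      apply sep_helper hcN (Int.ofNat_nonneg N) hx hx'
      rw [show (2 : ℤ) * k * (P * t.1) = 2 * k * P * t.1 by ring] at hqx
      rw [show (2 : ℤ) * k * (P * t'.1) = 2 * k * P * t'.1 by ring] at hqx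
      exact hqx
    have h2 : (t.2 : ℤ) = (t'.2 : ℤ) := by
      apply sep_helper hcN (Int.ofNat_nonneg N) hy2 hy2'
      rw [show (2 : ℤ) * k * (P * t.2) = 2 * k * P * t.2 by ring] at hqy
      rw [show (2 : ℤ) * k * (P * t'.2) = 2 * k * P * t'.2 by ring] at hqy
      exact hqy
    apply hne
    have : t.1 = t'.1 := by exact_mod_cast h1
    have : t.2 = t'.2 := by exact_mod_cast h2
    exact Prod.ext (by assumption) (by assumption)
  have hcount := counting (SOf ω) ((m : ℕ) : ℤ) Q
    (fun t => F.image (tEdge (svec k P t)))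
    (fun t => tEdge (svec k P t) e₁) (fun t => tEdge (svec k P t) e₂)
    (fun t => tEdge (svec k P t) e₃)
    (fun t ht => hQtrif t ht) hdisjQ ?_
  · calc Q.card ≤ _ := hcount
      _ ≤ 32 * m + 48 := ann_bound (SOf ω) m
      _ ≤ 64 * (k * P) * n + 32 * N + 144 := by rw [hm]; ring_nf; omega
  · intro t ht
    obtain ⟨ht1, ht2⟩ := hQrange t ht
    refine ⟨?_, hsmall_t t ht1 ht2 e₁ hsm1, hsmall_t t ht1 ht2 e₂ hsm2,
      hsmall_t t ht1 ht2 e₃ hsm3⟩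
    intro f hf
    rw [Finset.coe_image] at hf
    obtain ⟨f', hf', rfl⟩ := hf
    exact hsmall_t t ht1 ht2 f' (hsmF f' (Finset.mem_coe.mpr hf'))

end Final
section Conclusion

open Relation

lemma exists_N (F : Finset BEdge) (e₁ e₂ e₃ : BEdge) :
    ∃ N : ℕ, (∀ f ∈ (F : Set BEdge), small (N : ℤ) f) ∧
      small (N : ℤ) e₁ ∧ small (N : ℤ) e₂ ∧ small (N : ℤ) e₃ := by
  classical
  set G := insert e₁ (insert e₂ (insert e₃ F)) with hG
  set N := G.sup (fun f => (|f.1.1| + |f.1.2|).toNat) with hN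
  have key : ∀ f ∈ G, small (N : ℤ) f := by
    intro f hf
    have hle : (|f.1.1| + |f.1.2|).toNat ≤ N :=
      Finset.le_sup (f := fun f : BEdge => (|f.1.1| + |f.1.2|).toNat) hf
    have h1 := abs_nonneg f.1.1
    have h2 := abs_nonneg f.1.2
    constructor <;> omega
  refine ⟨N, ?_, ?_, ?_, ?_⟩
  · intro f hf
    exact key f (by rw [hG]; simp [Finset.mem_coe.mp hf])
  · exact key e₁ (by rw [hG]; simp)
  · exact key e₂ (by rw [hG]; simp)
  · exact key e₃ (by rw [hG]; simp)

lemma trifEv_zero (k : ℕ) (hk : 0 < k) (μ : Measure Config) [IsProbabilityMeasure μ]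
    (hAk1 : SatisfiesAk1 k μ) (F : Finset BEdge) (e₁ e₂ e₃ : BEdge) :
    μ (TrifEv F e₁ e₂ e₃) = 0 := by
  classical
  by_contra hδ
  obtain ⟨N, hsmF, hsm1, hsm2, hsm3⟩ := exists_N F e₁ e₂ e₃
  set P : ℕ := 2 * N + 5 with hP
  set δ := μ (TrifEv F e₁ e₂ e₃) with hδdef
  set c₁ : ℕ := 64 * (k * P) with hc₁
  set c₂ : ℕ := 32 * N + 144 with hc₂
  -- each translated event has the same probability
  have hμE : ∀ t : ℕ × ℕ,
      μ (TrifEv (F.image (tEdge (svec k P t))) (tEdge (svec k P t) e₁)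
        (tEdge (svec k P t) e₂) (tEdge (svec k P t) e₃)) = δ := by
    intro t
    have hmap : Measure.map (shift (svec k P t)) μ = μ :=
      (hAk1 ((P : ℤ) * (t.1 : ℤ), (P : ℤ) * (t.2 : ℤ)) :
        Measure.map (shift (svec k P t)) μ = μ)
    calc μ (TrifEv (F.image (tEdge (svec k P t))) (tEdge (svec k P t) e₁)
          (tEdge (svec k P t) e₂) (tEdge (svec k P t) e₃))
        = (Measure.map (shift (svec k P t)) μ) (TrifEv (F.image (tEdge (svec k P t)))
            (tEdge (svec k P t) e₁) (tEdge (svec k P t) e₂) (tEdge (svec k P t) e₃)) := by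
          rw [hmap]
      _ = μ (shift (svec k P t) ⁻¹' TrifEv (F.image (tEdge (svec k P t)))
            (tEdge (svec k P t) e₁) (tEdge (svec k P t) e₂) (tEdge (svec k P t) e₃)) :=
          Measure.map_apply (measurable_shift _) (meas_trifEv _ _ _ _)
      _ = μ (TrifEv F e₁ e₂ e₃) := by
          rw [← trifEv_preimage (svec k P t) (svec_even k P t) F e₁ e₂ e₃]
  -- the main estimate
  have hbound : ∀ n : ℕ,
      ((n * n : ℕ) : ℝ≥0∞) * δ ≤ ((c₁ * n + c₂ : ℕ) : ℝ≥0∞) := by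
    intro n
    set grid := (Finset.range n) ×ˢ (Finset.range n) with hgrid
    set E : ℕ × ℕ → Set Config := fun t =>
      TrifEv (F.image (tEdge (svec k P t))) (tEdge (svec k P t) e₁)
        (tEdge (svec k P t) e₂) (tEdge (svec k P t) e₃) with hE
    have hmeasE : ∀ t : ℕ × ℕ, MeasurableSet (E t) := fun t => meas_trifEv _ _ _ _
    have hsum1 : ∑ t ∈ grid, μ (E t) = ((n * n : ℕ) : ℝ≥0∞) * δ := by
      rw [Finset.sum_congr rfl (fun t _ => hμE t), Finset.sum_const, hgrid,
        Finset.card_product, Finset.card_range, nsmul_eq_mul]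
    have hsum2 : ∑ t ∈ grid, μ (E t) =
        ∫⁻ ω, ∑ t ∈ grid, (E t).indicator 1 ω ∂μ := by
      have hfs := lintegral_finset_sum (μ := μ) grid
        (f := fun t => (E t).indicator (1 : Config → ℝ≥0∞))
        (fun t _ => measurable_one.indicator (hmeasE t))
      rw [hfs]
      exact Finset.sum_congr rfl (fun t _ => (lintegral_indicator_one (hmeasE t)).symm)
    have hptwise : ∀ ω : Config, ∑ t ∈ grid, (E t).indicator 1 ω ≤
        ((c₁ * n + c₂ : ℕ) : ℝ≥0∞) := by
      intro ω
      have h1 : ∑ t ∈ grid, (E t).indicator (1 : Config → ℝ≥0∞) ω =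
          ((grid.filter (fun t => ω ∈ E t)).card : ℝ≥0∞) := by
        rw [← Finset.sum_boole]
        refine Finset.sum_congr rfl (fun t _ => ?_)
        simp [Set.indicator_apply]
      rw [h1]
      have h2 := grid_count k P N hk hP F e₁ e₂ e₃ hsmF hsm1 hsm2 hsm3 n ω
      have h3 : (grid.filter (fun t => ω ∈ E t)).card ≤ c₁ * n + c₂ := by
        rw [hc₁]
        exact h2
      exact_mod_cast Nat.cast_le.mpr h3
    calc ((n * n : ℕ) : ℝ≥0∞) * δ = ∑ t ∈ grid, μ (E t) := hsum1.symm
      _ = ∫⁻ ω, ∑ t ∈ grid, (E t).indicator 1 ω ∂μ := hsum2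
      _ ≤ ∫⁻ _ω, ((c₁ * n + c₂ : ℕ) : ℝ≥0∞) ∂μ := lintegral_mono (fun ω => hptwise ω)
      _ = ((c₁ * n + c₂ : ℕ) : ℝ≥0∞) := by
          rw [lintegral_const, measure_univ, mul_one]
  -- derive a contradiction
  have hδtop : δ ≠ ⊤ := by
    rw [hδdef]
    exact (measure_lt_top μ _).ne
  have hlin : ∀ n : ℕ, 1 ≤ n → (n : ℝ≥0∞) * δ ≤ ((c₁ + c₂ : ℕ) : ℝ≥0∞) := by
    intro n hn
    have h1 := hbound n
    have h2 : ((c₁ * n + c₂ : ℕ) : ℝ≥0∞) ≤ ((c₁ + c₂ : ℕ) : ℝ≥0∞) * (n : ℝ≥0∞) := by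
      have h3 : c₁ * n + c₂ ≤ (c₁ + c₂) * n := by
        have h4 : c₂ * 1 ≤ c₂ * n := Nat.mul_le_mul_left c₂ hn
        calc c₁ * n + c₂ = c₁ * n + c₂ * 1 := by ring
          _ ≤ c₁ * n + c₂ * n := by omega
          _ = (c₁ + c₂) * n := by ring
      calc ((c₁ * n + c₂ : ℕ) : ℝ≥0∞) ≤ (((c₁ + c₂) * n : ℕ) : ℝ≥0∞) :=
            Nat.cast_le.mpr h3
        _ = ((c₁ + c₂ : ℕ) : ℝ≥0∞) * (n : ℝ≥0∞) := by push_cast; ring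
    have h5 : (n : ℝ≥0∞) * ((n : ℝ≥0∞) * δ) ≤ (n : ℝ≥0∞) * ((c₁ + c₂ : ℕ) : ℝ≥0∞) := by
      calc (n : ℝ≥0∞) * ((n : ℝ≥0∞) * δ) = ((n * n : ℕ) : ℝ≥0∞) * δ := by
            push_cast; ring
        _ ≤ ((c₁ * n + c₂ : ℕ) : ℝ≥0∞) := h1
        _ ≤ ((c₁ + c₂ : ℕ) : ℝ≥0∞) * (n : ℝ≥0∞) := h2
        _ = (n : ℝ≥0∞) * ((c₁ + c₂ : ℕ) : ℝ≥0∞) := mul_comm _ _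
    have hn0 : (n : ℝ≥0∞) ≠ 0 := by
      simp only [ne_eq, Nat.cast_eq_zero]
      omega
    exact (ENNReal.mul_le_mul_iff_right hn0 (ENNReal.natCast_ne_top n)).mp h5
  have hdivtop : ((c₁ + c₂ : ℕ) : ℝ≥0∞) / δ ≠ ⊤ :=
    (ENNReal.div_lt_top (ENNReal.natCast_ne_top _) hδ).ne
  obtain ⟨n, hn⟩ := ENNReal.exists_nat_gt hdivtop
  have hn1 : 1 ≤ n := by
    rcases Nat.eq_zero_or_pos n with rfl | h
    · exfalso
      simp only [Nat.cast_zero] at hn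
      exact (not_lt.mpr zero_le) hn
    · exact h
  have h6 := hlin n hn1
  have h7 : ((c₁ + c₂ : ℕ) : ℝ≥0∞) < (n : ℝ≥0∞) * δ :=
    (ENNReal.div_lt_iff (Or.inl hδ) (Or.inl hδtop)).mp hn
  exact absurd h6 (not_le.mpr h7)

end Conclusion
/-- Lemma 3.1 of the paper: under (Ak1), almost surely no contour has
more than two ends. -/
theorem no_contour_with_more_than_two_ends
    (k : ℕ) (hk : 0 < k) (μ : Measure Config) [IsProbabilityMeasure μ]
    (hΩ : μ {ω | Constrained ω} = 1)
    (hAk1 : SatisfiesAk1 k μ) :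
    μ {ω | ∃ C, IsContour ω C ∧ ¬AtMostTwoEnds C} = 0 := by
  have hzero : ∀ z : Finset BEdge × BEdge × BEdge × BEdge,
      μ (TrifEv z.1 z.2.1 z.2.2.1 z.2.2.2) = 0 :=
    fun z => trifEv_zero k hk μ hAk1 z.1 z.2.1 z.2.2.1 z.2.2.2
  have hsub : {ω | ∃ C, IsContour ω C ∧ ¬AtMostTwoEnds C} ⊆
      ⋃ z : Finset BEdge × BEdge × BEdge × BEdge, TrifEv z.1 z.2.1 z.2.2.1 z.2.2.2 := by
    intro ω hω
    obtain ⟨F, e₁, e₂, e₃, h⟩ := trif_of_bad hω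
    exact Set.mem_iUnion.mpr ⟨(F, e₁, e₂, e₃), h⟩
  refine le_antisymm ?_ zero_le
  calc μ {ω | ∃ C, IsContour ω C ∧ ¬AtMostTwoEnds C}
      ≤ μ (⋃ z : Finset BEdge × BEdge × BEdge × BEdge,
          TrifEv z.1 z.2.1 z.2.2.1 z.2.2.2) := measure_mono hsub
    _ ≤ ∑' z : Finset BEdge × BEdge × BEdge × BEdge,
          μ (TrifEv z.1 z.2.1 z.2.2.1 z.2.2.2) := measure_iUnion_le _
    _ = 0 := by simp [hzero]

end CP

end
end
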